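/- arXiv:1903.00051 — 9 statements merged into one kernel-verified Lean document; each statement's English description precedes it below -/
import Mathlib

section
/- Let A be a uniform algebra on a compact Hausdorff space Y and let p ∈ Y be a p-point of A (a point of the strong boundary). Then every point derivation of A at p is identically zero. -/
open ContinuousMap

open Filter Topology

set_option maxHeartbeats 8000000
set_option synthInstance.maxHeartbeats 2000000

/-- A peak set of a uniform algebra `A` on `Y`: a closed set `P` such that some `f ∈ A`
equals `1` on `P` and has modulus strictly less than `1` off `P`. -/
def IsPeakSet {Y : Type*} [TopologicalSpace Y] (A : Subalgebra ℂ C(Y, ℂ)) (P : Set Y) : Prop :=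
  IsClosed P ∧ ∃ f ∈ A, (∀ y ∈ P, f y = 1) ∧ ∀ y ∉ P, ‖f y‖ < 1

/-- A `p`-point of `A`: a point whose singleton is an intersection of peak sets of `A`.
The strong boundary of `A` is the set of all `p`-points. -/
def IsPPoint {Y : Type*} [TopologicalSpace Y] (A : Subalgebra ℂ C(Y, ℂ)) (p : Y) : Prop :=
  ∃ Ps : Set (Set Y), (∀ P ∈ Ps, IsPeakSet A P) ∧ ⋂₀ Ps = {p}

lemma peak_approx {Y : Type*} [TopologicalSpace Y] [CompactSpace Y]
    (A : Subalgebra ℂ C(Y, ℂ)) (p : Y) (hp : IsPPoint A p)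
    {U : Set Y} (hU : IsOpen U) (hpU : p ∈ U) {ε : ℝ} (hε : 0 < ε) :
    ∃ u : A, (u : C(Y,ℂ)) p = 1 ∧ (∀ y, ‖(u : C(Y,ℂ)) y‖ ≤ 1) ∧
      ∀ y ∉ U, ‖(u : C(Y,ℂ)) y‖ ≤ ε := by
  classical
  obtain ⟨Ps, hPs, hInt⟩ := hp
  have hpP : ∀ P ∈ Ps, p ∈ P := by
    intro P hP
    have hmem : p ∈ ⋂₀ Ps := by rw [hInt]; exact rfl
    exact hmem P hP
  -- choose peak functions
  choose F hFmem hF1 hFlt using fun (P : Ps) => (hPs P P.2).2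
  set FA : Ps → A := fun P => ⟨F P, hFmem P⟩ with hFA
  have hFnorm : ∀ (P : Ps) y, ‖F P y‖ ≤ 1 := by
    intro P y
    by_cases hy : y ∈ (P : Set Y)
    · simp [hF1 P y hy]
    · exact le_of_lt (hFlt P y hy)
  -- compact complement covered
  have hK : IsCompact Uᶜ := (hU.isClosed_compl).isCompact
  have hcov : Uᶜ ⊆ ⋃ (P : Ps), (P : Set Y)ᶜ := by
    intro y hy
    have hyp : y ≠ p := fun h => hy (h ▸ hpU)
    by_contra hc
    simp only [Set.mem_iUnion, Set.mem_compl_iff, not_exists, not_not] at hc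
    have : y ∈ ⋂₀ Ps := fun P hP => hc ⟨P, hP⟩
    rw [hInt] at this
    exact hyp this
  obtain ⟨t, ht⟩ := hK.elim_finite_subcover (fun P : Ps => (P : Set Y)ᶜ)
    (fun P => (hPs P P.2).1.isOpen_compl) hcov
  set v : A := ∏ P ∈ t, FA P with hv
  have hvy : ∀ y, (v : C(Y,ℂ)) y = ∏ P ∈ t, F P y := by
    intro y
    rw [hv]
    push_cast
    rw [ContinuousMap.prod_apply]
  have hvp : (v : C(Y,ℂ)) p = 1 := by
    rw [hvy]
    exact Finset.prod_eq_one fun P _ => hF1 P p (hpP P P.2)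
  have hvnorm : ∀ y, ‖(v : C(Y,ℂ)) y‖ ≤ 1 := by
    intro y
    rw [hvy, norm_prod]
    exact Finset.prod_le_one (fun P _ => norm_nonneg _) (fun P _ => hFnorm P y)
  have hvlt : ∀ y ∉ U, ‖(v : C(Y,ℂ)) y‖ < 1 := by
    intro y hy
    obtain ⟨P, hPt, hyP⟩ : ∃ P ∈ t, y ∈ (P : Set Y)ᶜ := by
      have := ht hy
      simpa using this
    rw [hvy, norm_prod]
    calc ∏ Q ∈ t, ‖F Q y‖ = ‖F P y‖ * ∏ Q ∈ t.erase P, ‖F Q y‖ :=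
          (Finset.mul_prod_erase t _ hPt).symm
      _ ≤ ‖F P y‖ * 1 := by
          apply mul_le_mul_of_nonneg_left _ (norm_nonneg _)
          exact Finset.prod_le_one (fun Q _ => norm_nonneg _) (fun Q _ => hFnorm Q y)
      _ < 1 := by rw [mul_one]; exact hFlt P y hyP
  rcases Set.eq_empty_or_nonempty Uᶜ with hKe | hKne
  · refine ⟨1, by simp, by simp, fun y hy => absurd (hKe ▸ hy : y ∈ (∅ : Set Y)) (by simp)⟩
  · obtain ⟨y₀, hy₀K, hy₀max⟩ := hK.exists_isMaxOn hKne
      (Continuous.continuousOn (by continuity : Continuous fun y => ‖(v : C(Y,ℂ)) y‖))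
    set m := ‖(v : C(Y,ℂ)) y₀‖ with hm
    have hm0 : 0 ≤ m := norm_nonneg _
    have hm1 : m < 1 := hvlt y₀ hy₀K
    obtain ⟨n, hn⟩ := exists_pow_lt_of_lt_one hε hm1
    refine ⟨v ^ n, ?_, ?_, ?_⟩
    · push_cast; rw [hvp, one_pow]
    · intro y; push_cast; rw [norm_pow]
      exact pow_le_one₀ (norm_nonneg _) (hvnorm y)
    · intro y hy
      push_cast
      rw [norm_pow]
      calc ‖(v : C(Y,ℂ)) y‖ ^ n ≤ m ^ n :=
            pow_le_pow_left₀ (norm_nonneg _) (hy₀max hy) n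
        _ ≤ ε := le_of_lt hn

lemma normA_le {Y : Type*} [TopologicalSpace Y] [CompactSpace Y]
    {A : Subalgebra ℂ C(Y, ℂ)} (a : A) {M : ℝ} (hM : 0 ≤ M)
    (h : ∀ y, ‖(a : C(Y,ℂ)) y‖ ≤ M) : ‖a‖ ≤ M :=
  (ContinuousMap.norm_le _ hM).mpr h

lemma factor {Y : Type*} [TopologicalSpace Y] [CompactSpace Y]
    (A : Subalgebra ℂ C(Y, ℂ)) (hA : IsClosed (A : Set C(Y, ℂ)))
    (p : Y) (hp : IsPPoint A p) (f : A) (hf : (f : C(Y,ℂ)) p = 0) :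
    ∃ g h : A, (g : C(Y,ℂ)) p = 0 ∧ (h : C(Y,ℂ)) p = 0 ∧ f = g * h := by
  haveI : CompleteSpace A := hA.completeSpace_coe
  obtain ⟨C, hCdef⟩ : ∃ C : ℝ, C = 128 * (1 + ‖f‖) := ⟨_, rfl⟩
  have hC0 : (0:ℝ) < C := by rw [hCdef]; positivity
  have hC128 : (128:ℝ) ≤ C := by rw [hCdef]; nlinarith [norm_nonneg f]
  -- Step 1: choose peak-type functions u n
  have key : ∀ n : ℕ, ∃ u : A, (u : C(Y,ℂ)) p = 1 ∧ (∀ y, ‖(u : C(Y,ℂ)) y‖ ≤ 1) ∧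
      ∀ y, ‖(f : C(Y,ℂ)) y * (u : C(Y,ℂ)) y‖ ≤ (1/4:ℝ)^n := by
    intro n
    set U : Set Y := {y | ‖(f : C(Y,ℂ)) y‖ < (1/4:ℝ)^n} with hUdef
    have hUopen : IsOpen U :=
      isOpen_lt (Continuous.norm ((f : C(Y,ℂ)).continuous)) continuous_const
    have hpU : p ∈ U := by
      simp only [hUdef, Set.mem_setOf_eq, hf, norm_zero]
      positivity
    have hε : (0:ℝ) < (1/4:ℝ)^n / (‖f‖ + 1) := by positivity
    obtain ⟨u, hu1, hu2, hu3⟩ := peak_approx A p hp hUopen hpU hε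
    refine ⟨u, hu1, hu2, fun y => ?_⟩
    rw [norm_mul]
    by_cases hy : y ∈ U
    · have h1 : ‖(f : C(Y,ℂ)) y‖ < (1/4:ℝ)^n := hy
      have h2 := hu2 y
      nlinarith [norm_nonneg ((f : C(Y,ℂ)) y), norm_nonneg ((u : C(Y,ℂ)) y)]
    · have h1 : ‖(f : C(Y,ℂ)) y‖ ≤ ‖f‖ := (f : C(Y,ℂ)).norm_coe_le_norm y
      have h2 := hu3 y hy
      have h3 : (0:ℝ) < ‖f‖ + 1 := by positivity
      have h4 : ‖(f : C(Y,ℂ)) y‖ * ‖(u : C(Y,ℂ)) y‖ ≤ ‖f‖ * ((1/4:ℝ)^n / (‖f‖ + 1)) := by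
        apply mul_le_mul h1 h2 (norm_nonneg _) (norm_nonneg _)
      calc ‖(f : C(Y,ℂ)) y‖ * ‖(u : C(Y,ℂ)) y‖ ≤ ‖f‖ * ((1/4:ℝ)^n / (‖f‖ + 1)) := h4
        _ ≤ (1/4:ℝ)^n := by
            rw [mul_div_assoc']
            rw [div_le_iff₀ h3]
            nlinarith [pow_pos (by norm_num : (0:ℝ) < 1/4) n, norm_nonneg f]
  choose u hup hub hufu using key
  -- Step 2: define h
  set w : ℕ → A := fun n => (((1/2:ℝ)^(n+1) : ℝ) : ℂ) • (1 - u n) with hwdef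
  have hwy : ∀ n y, ((w n : C(Y,ℂ))) y = (((1/2:ℝ)^(n+1) : ℝ) : ℂ) * (1 - (u n : C(Y,ℂ)) y) := by
    intro n y; rfl
  have hwnorm : ∀ n, ‖w n‖ ≤ (1/2:ℝ)^n := by
    intro n
    apply normA_le _ (by positivity)
    intro y
    rw [hwy, norm_mul, Complex.norm_real]
    have h1 : ‖(1 : ℂ) - (u n : C(Y,ℂ)) y‖ ≤ 2 := by
      calc ‖(1 : ℂ) - (u n : C(Y,ℂ)) y‖ ≤ ‖(1:ℂ)‖ + ‖(u n : C(Y,ℂ)) y‖ := norm_sub_le _ _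
        _ ≤ 2 := by have := hub n y; simp at *; linarith
    have h2 : |(1/2:ℝ)^(n+1)| = (1/2:ℝ)^(n+1) := abs_of_pos (by positivity)
    rw [Real.norm_eq_abs, h2]
    calc (1/2:ℝ)^(n+1) * ‖(1 : ℂ) - (u n : C(Y,ℂ)) y‖ ≤ (1/2:ℝ)^(n+1) * 2 := by
          apply mul_le_mul_of_nonneg_left h1 (by positivity)
      _ = (1/2:ℝ)^n := by ring
  have hsumw : Summable w :=
    Summable.of_norm_bounded (summable_geometric_of_lt_one (by norm_num) (by norm_num)) hwnorm
  set h : A := ∑' n, w n with hhdef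
  -- pointwise formula for h
  have hsumwy : ∀ y, Summable (fun n => (w n : C(Y,ℂ)) y) := by
    intro y
    apply Summable.of_norm_bounded (summable_geometric_of_lt_one (by norm_num : (0:ℝ) ≤ 1/2) (by norm_num))
    intro n
    calc ‖(w n : C(Y,ℂ)) y‖ ≤ ‖w n‖ := (w n : C(Y,ℂ)).norm_coe_le_norm y
      _ ≤ (1/2:ℝ)^n := hwnorm n
  have hhy : ∀ y, (h : C(Y,ℂ)) y = ∑' n, ((w n : C(Y,ℂ)) y) := by
    intro y
    have := (ContinuousMap.evalCLM ℂ y).comp (Subalgebra.toSubmodule A).subtypeL |>.map_tsum hsumw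
    exact this
  -- real part
  set R : Y → ℝ := fun y => ((h : C(Y,ℂ)) y).re with hRdef
  have hre : ∀ y, R y = ∑' n, (1/2:ℝ)^(n+1) * (1 - ((u n : C(Y,ℂ)) y).re) := by
    intro y
    rw [hRdef]
    simp only
    rw [hhy]
    have hmap := Complex.reCLM.map_tsum (hsumwy y)
    simp only [Complex.reCLM_apply] at hmap
    rw [hmap]
    congr 1
    funext n
    rw [hwy, Complex.re_ofReal_mul, Complex.sub_re, Complex.one_re]
  have hterm_nonneg : ∀ n y, 0 ≤ (1/2:ℝ)^(n+1) * (1 - ((u n : C(Y,ℂ)) y).re) := by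
    intro n y
    have h1 : ((u n : C(Y,ℂ)) y).re ≤ 1 :=
      le_trans (Complex.re_le_norm _) (by exact hub n y)
    have : (0:ℝ) < (1/2:ℝ)^(n+1) := by positivity
    nlinarith
  have hsumre : ∀ y, Summable (fun n => (1/2:ℝ)^(n+1) * (1 - ((u n : C(Y,ℂ)) y).re)) := by
    intro y
    apply Summable.of_norm_bounded (summable_geometric_of_lt_one (by norm_num : (0:ℝ) ≤ 1/2) (by norm_num))
    intro n
    have h1 : ((u n : C(Y,ℂ)) y).re ≤ 1 :=
      le_trans (Complex.re_le_norm _) (by exact hub n y)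
    have h1' : -1 ≤ ((u n : C(Y,ℂ)) y).re := by
      have := Complex.abs_re_le_norm ((u n : C(Y,ℂ)) y)
      have h2 : ‖(u n : C(Y,ℂ)) y‖ ≤ 1 := hub n y
      cases abs_le.mp (le_trans this h2) with
      | intro a b => linarith
    rw [Real.norm_eq_abs, abs_of_nonneg (hterm_nonneg n y)]
    have hp2 : (0:ℝ) < (1/2:ℝ)^(n+1) := by positivity
    calc (1/2:ℝ)^(n+1) * (1 - ((u n : C(Y,ℂ)) y).re) ≤ (1/2:ℝ)^(n+1) * 2 := by nlinarith
      _ = (1/2:ℝ)^n := by ring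
  have hR0 : ∀ y, 0 ≤ R y := by
    intro y
    rw [hre]
    exact tsum_nonneg (fun n => hterm_nonneg n y)
  have hRle : ∀ y, R y ≤ ‖h‖ := by
    intro y
    calc R y ≤ ‖(h : C(Y,ℂ)) y‖ := Complex.re_le_norm _
      _ = ‖(h : C(Y,ℂ)) y‖ := rfl
      _ ≤ ‖h‖ := (h : C(Y,ℂ)).norm_coe_le_norm y
  have hRlow : ∀ y n, (1/2:ℝ)^(n+1) * (1 - ((u n : C(Y,ℂ)) y).re) ≤ R y := by
    intro y n
    rw [hre]
    exact Summable.le_tsum (hsumre y) n (fun m _ => hterm_nonneg m y)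
  have hhp : (h : C(Y,ℂ)) p = 0 := by
    rw [hhy]
    have : ∀ n, (w n : C(Y,ℂ)) p = 0 := by
      intro n; rw [hwy, hup]; ring
    simp [this]
  -- Step 3: the key pointwise estimate ‖f y‖ ≤ C * (R y)^2
  have hfR : ∀ y, ‖(f : C(Y,ℂ)) y‖ ≤ C * (R y)^2 := by
    intro y
    by_cases hfy : (f : C(Y,ℂ)) y = 0
    · rw [hfy, norm_zero]; positivity
    · set a : ℝ := ‖(f : C(Y,ℂ)) y‖ with hadef
      have ha0 : 0 < a := norm_pos_iff.mpr hfy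
      have hex : ∃ n : ℕ, (1/4:ℝ)^n ≤ a/2 := by
        obtain ⟨n, hn⟩ := exists_pow_lt_of_lt_one (by positivity : (0:ℝ) < a/2) (by norm_num : (1/4:ℝ) < 1)
        exact ⟨n, le_of_lt hn⟩
      set n : ℕ := Nat.find hex with hndef
      have hn : (1/4:ℝ)^n ≤ a/2 := Nat.find_spec hex
      have husmall : ‖(u n : C(Y,ℂ)) y‖ ≤ 1/2 := by
        have h1 := hufu n y
        rw [norm_mul, ← hadef] at h1
        have h2 : a * ‖(u n : C(Y,ℂ)) y‖ ≤ a/2 := le_trans h1 hn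
        nlinarith [norm_nonneg ((u n : C(Y,ℂ)) y)]
      have hure : ((u n : C(Y,ℂ)) y).re ≤ 1/2 :=
        le_trans (Complex.re_le_norm _) (by exact husmall)
      have hRn : (1/2:ℝ)^(n+2) ≤ R y := by
        have h1 := hRlow y n
        have hp2 : (0:ℝ) < (1/2:ℝ)^(n+1) := by positivity
        have h2 : (1/2:ℝ)^(n+2) ≤ (1/2:ℝ)^(n+1) * (1 - ((u n : C(Y,ℂ)) y).re) := by
          have : (1/2:ℝ)^(n+2) = (1/2:ℝ)^(n+1) * (1/2) := by ring
          rw [this]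
          nlinarith
        linarith
      have hRsq : (1/4:ℝ)^n / 16 ≤ (R y)^2 := by
        have h1 : ((1/2:ℝ)^(n+2))^2 = (1/4:ℝ)^n / 16 := by
          rw [← pow_mul, Nat.mul_comm, pow_mul]
          norm_num
          rw [pow_add]
          norm_num
          ring
        have h2 := mul_self_le_mul_self (by positivity : (0:ℝ) ≤ (1/2:ℝ)^(n+2)) hRn
        nlinarith [h2, h1]
      rcases Nat.eq_zero_or_pos n with hn0 | hn1
      · have haf : a ≤ ‖f‖ := (f : C(Y,ℂ)).norm_coe_le_norm y
        have : (1/4:ℝ)^n / 16 = 1/16 := by rw [hn0]; norm_num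
        rw [this] at hRsq
        nlinarith [hR0 y]
      · have hmin : ¬ ((1/4:ℝ)^(n-1) ≤ a/2) := Nat.find_min hex (Nat.sub_lt hn1 Nat.one_pos)
        push_neg at hmin
        have h4 : (1/4:ℝ)^(n-1) = 4 * (1/4:ℝ)^n := by
          have : n - 1 + 1 = n := Nat.succ_pred_eq_of_pos hn1
          calc (1/4:ℝ)^(n-1) = (1/4:ℝ)^(n-1+1) * 4 := by ring
            _ = 4 * (1/4:ℝ)^n := by rw [this]; ring
        rw [h4] at hmin
        -- a < 8 * (1/4)^n ≤ 8 * 16 * (R y)^2 / ... : a ≤ 128 (R y)^2 ≤ C (R y)^2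
        have h5 : a < 8 * (1/4:ℝ)^n := by linarith
        have h6 : (128:ℝ) * ((1/4:ℝ)^n / 16) ≤ 128 * (R y)^2 := by nlinarith
        have h7 : (128:ℝ) * (R y)^2 ≤ C * (R y)^2 := by nlinarith [hR0 y, sq_nonneg (R y)]
        have : a < C * (R y)^2 :=
          calc a < 8 * (1/4:ℝ)^n := h5
            _ = 128 * ((1/4:ℝ)^n / 16) := by ring
            _ ≤ 128 * (R y)^2 := h6
            _ ≤ C * (R y)^2 := h7
        exact this.le
  -- Step 4: inverses of h + t
  have inv_ex : ∀ t : ℝ, 0 < t → ∃ v : A,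
      (h + ((t:ℝ):ℂ) • 1) * v = 1 ∧ ∀ y, (v : C(Y,ℂ)) y = ((h : C(Y,ℂ)) y + t)⁻¹ := by
    intro t ht
    set b : A := h + ((t:ℝ):ℂ) • 1 with hbdef
    have hby : ∀ y, (b : C(Y,ℂ)) y = (h : C(Y,ℂ)) y + t := by
      intro y
      show (h : C(Y,ℂ)) y + ((t:ℝ):ℂ) * 1 = _
      ring
    set Rt : ℝ := ‖h‖ + t with hRtdef
    have hRt : 0 < Rt := by have := norm_nonneg h; rw [hRtdef]; linarith
    have hbre : ∀ y, ((b : C(Y,ℂ)) y).re = R y + t := by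
      intro y; rw [hby]; rw [Complex.add_re, Complex.ofReal_re]
    have hbnorm : ∀ y, ‖(b : C(Y,ℂ)) y‖ ≤ Rt := by
      intro y; rw [hby]
      calc ‖(h : C(Y,ℂ)) y + ((t:ℝ):ℂ)‖ ≤ ‖(h : C(Y,ℂ)) y‖ + ‖((t:ℝ):ℂ)‖ := norm_add_le _ _
        _ ≤ ‖h‖ + t := by
            have h1 := (h : C(Y,ℂ)).norm_coe_le_norm y
            have h2 : ‖(h : C(Y,ℂ))‖ = ‖h‖ := rfl
            rw [h2] at h1
            rw [Complex.norm_real, Real.norm_eq_abs, abs_of_pos ht]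
            linarith
    set c : ℝ := t / Rt^2 with hcdef
    have hc : 0 < c := by positivity
    have hcRt : c * Rt^2 = t := by rw [hcdef]; field_simp
    set x : A := 1 - ((c:ℝ):ℂ) • b with hxdef
    have hxnorm : ‖x‖ < 1 := by
      have htR : t ≤ Rt := by rw [hRtdef]; have := norm_nonneg h; linarith
      have h0x : 0 ≤ 1 - t^2/Rt^2 := by
        rw [sub_nonneg, div_le_one (by positivity)]
        nlinarith
      have hbound : ∀ y, ‖(x : C(Y,ℂ)) y‖ ≤ Real.sqrt (1 - t^2/Rt^2) := by
        intro y
        have hxy : (x : C(Y,ℂ)) y = 1 - ((c:ℝ):ℂ) * (b : C(Y,ℂ)) y := rfl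
        have hsq : ‖(x : C(Y,ℂ)) y‖^2 ≤ 1 - t^2/Rt^2 := by
          rw [hxy]
          set z : ℂ := (b : C(Y,ℂ)) y with hz
          have e1 : ‖1 - ((c:ℝ):ℂ)*z‖^2 = 1 - 2*c*z.re + c^2*(z.re^2+z.im^2) := by
            rw [Complex.sq_norm]
            simp [Complex.normSq_apply, Complex.sub_re, Complex.sub_im,
              Complex.mul_re, Complex.mul_im]
            ring
          have e2 : z.re^2 + z.im^2 ≤ Rt^2 := by
            have e2' : z.re^2 + z.im^2 = ‖z‖^2 := by
              rw [Complex.sq_norm, Complex.normSq_apply]; ring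
            rw [e2']
            have hb := hbnorm y
            nlinarith [norm_nonneg z]
          have e3 : t ≤ z.re := by
            rw [hz, hbre]; have := hR0 y; linarith
          have e4 : t^2/Rt^2 = c^2*Rt^2 := by
            rw [hcdef]; field_simp
          rw [e1, e4]
          nlinarith [sq_nonneg c, mul_le_mul_of_nonneg_left e2 (sq_nonneg c),
            mul_le_mul_of_nonneg_left e3 (le_of_lt hc), hcRt]
        calc ‖(x : C(Y,ℂ)) y‖ = Real.sqrt (‖(x : C(Y,ℂ)) y‖^2) :=
              (Real.sqrt_sq (norm_nonneg _)).symm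
          _ ≤ Real.sqrt (1 - t^2/Rt^2) := Real.sqrt_le_sqrt hsq
      have hlt1 : Real.sqrt (1 - t^2/Rt^2) < 1 := by
        have hq : 0 < t^2/Rt^2 := by positivity
        calc Real.sqrt (1 - t^2/Rt^2) < Real.sqrt 1 := Real.sqrt_lt_sqrt h0x (by linarith)
          _ = 1 := Real.sqrt_one
      exact lt_of_le_of_lt (normA_le x (Real.sqrt_nonneg _) hbound) hlt1
    set W : (↥A)ˣ := Units.oneSub x hxnorm with hWdef
    have hWcoe : (W : A) = ((c:ℝ):ℂ) • b := by
      show 1 - x = _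
      rw [hxdef, sub_sub_cancel]
    set v : A := ((c:ℝ):ℂ) • (↑W⁻¹ : A) with hvdef
    have hbv : b * v = 1 := by
      calc b * v = (((c:ℝ):ℂ) • b) * (↑W⁻¹ : A) := by
            rw [hvdef, mul_smul_comm, smul_mul_assoc]
        _ = (W : A) * (↑W⁻¹ : A) := by rw [hWcoe]
        _ = 1 := W.mul_inv
    refine ⟨v, hbv, fun y => ?_⟩
    have hbvy : (b : C(Y,ℂ)) y * (v : C(Y,ℂ)) y = 1 := by
      have e : ((b*v : A) : C(Y,ℂ)) y = ((1:A) : C(Y,ℂ)) y := by rw [hbv]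
      exact e
    rw [← hby]
    exact (inv_eq_of_mul_eq_one_right hbvy).symm
  -- Step 5: the sequence g_n
  set tn : ℕ → ℝ := fun n => 1/(n+1) with htndef
  have htnpos : ∀ n, 0 < tn n := fun n => by positivity
  choose vs hvs1 hvs2 using fun n => inv_ex (tn n) (htnpos n)
  set gs : ℕ → A := fun n => f * vs n with hgsdef
  have hgsy : ∀ n y, (gs n : C(Y,ℂ)) y = (f : C(Y,ℂ)) y * ((h : C(Y,ℂ)) y + tn n)⁻¹ := by
    intro n y
    show (f : C(Y,ℂ)) y * (vs n : C(Y,ℂ)) y = _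
    rw [hvs2]
  have hden : ∀ n y, R y + tn n ≤ ‖(h : C(Y,ℂ)) y + ((tn n :ℝ):ℂ)‖ := by
    intro n y
    have e : ((h : C(Y,ℂ)) y + ((tn n:ℝ):ℂ)).re = R y + tn n := by
      rw [Complex.add_re, Complex.ofReal_re]
    calc R y + tn n = ((h : C(Y,ℂ)) y + ((tn n:ℝ):ℂ)).re := e.symm
      _ ≤ ‖(h : C(Y,ℂ)) y + ((tn n:ℝ):ℂ)‖ := Complex.re_le_norm _
      _ = ‖(h : C(Y,ℂ)) y + ((tn n:ℝ):ℂ)‖ := rfl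
  have hdenpos : ∀ n y, 0 < R y + tn n := fun n y => by
    have := hR0 y; have := htnpos n; linarith
  have hgnorm : ∀ n, ‖gs n‖ ≤ C * ‖h‖ := by
    intro n
    apply normA_le _ (by positivity)
    intro y
    rw [hgsy, norm_mul, norm_inv]
    have hinv : ‖(h : C(Y,ℂ)) y + ((tn n:ℝ):ℂ)‖⁻¹ ≤ (R y + tn n)⁻¹ :=
      inv_anti₀ (hdenpos n y) (hden n y)
    calc ‖(f : C(Y,ℂ)) y‖ * ‖(h : C(Y,ℂ)) y + ((tn n:ℝ):ℂ)‖⁻¹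
        ≤ (C * (R y)^2) * (R y + tn n)⁻¹ := by
          apply mul_le_mul (hfR y) hinv (by positivity) (by positivity)
      _ ≤ C * R y := by
          rw [← div_eq_mul_inv, div_le_iff₀ (hdenpos n y)]
          nlinarith [hR0 y, htnpos n, mul_nonneg (mul_nonneg hC0.le (hR0 y)) (htnpos n).le]
      _ ≤ C * ‖h‖ := by nlinarith [hRle y, hC0]
  have hdiff : ∀ m k, ‖gs m - gs k‖ ≤ C * |tn m - tn k| := by
    intro m k
    apply normA_le _ (by positivity)
    intro y
    set z : ℂ := (h : C(Y,ℂ)) y with hz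
    have hzm : (z + ((tn m:ℝ):ℂ)) ≠ 0 := by
      intro h0
      have := hden m y
      rw [← hz, h0] at this
      simp at this
      have := hdenpos m y; linarith
    have hzk : (z + ((tn k:ℝ):ℂ)) ≠ 0 := by
      intro h0
      have := hden k y
      rw [← hz, h0] at this
      simp at this
      have := hdenpos k y; linarith
    have e : ((gs m - gs k : A) : C(Y,ℂ)) y =
        (f : C(Y,ℂ)) y * ((((tn k:ℝ):ℂ) - ((tn m:ℝ):ℂ)) * ((z + ((tn m:ℝ):ℂ))⁻¹ * (z + ((tn k:ℝ):ℂ))⁻¹)) := by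
      have e1 : ((gs m - gs k : A) : C(Y,ℂ)) y = (gs m : C(Y,ℂ)) y - (gs k : C(Y,ℂ)) y := rfl
      rw [e1, hgsy, hgsy, ← hz]
      field_simp
      ring
    rw [e, norm_mul, norm_mul, norm_mul, norm_inv, norm_inv]
    have habs : ‖((tn k:ℝ):ℂ) - ((tn m:ℝ):ℂ)‖ = |tn m - tn k| := by
      rw [← Complex.ofReal_sub, Complex.norm_real, Real.norm_eq_abs, abs_sub_comm]
    rw [habs]
    have hinvm : ‖z + ((tn m:ℝ):ℂ)‖⁻¹ ≤ (R y + tn m)⁻¹ :=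
      inv_anti₀ (hdenpos m y) (hden m y)
    have hinvk : ‖z + ((tn k:ℝ):ℂ)‖⁻¹ ≤ (R y + tn k)⁻¹ :=
      inv_anti₀ (hdenpos k y) (hden k y)
    calc ‖(f : C(Y,ℂ)) y‖ * (|tn m - tn k| * (‖z + ((tn m:ℝ):ℂ)‖⁻¹ * ‖z + ((tn k:ℝ):ℂ)‖⁻¹))
        ≤ (C * (R y)^2) * (|tn m - tn k| * ((R y + tn m)⁻¹ * (R y + tn k)⁻¹)) := by
          apply mul_le_mul (hfR y) _ (mul_nonneg (abs_nonneg _) (mul_nonneg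
            (inv_nonneg.mpr (norm_nonneg _)) (inv_nonneg.mpr (norm_nonneg _))))
            (le_trans (norm_nonneg _) (hfR y))
          apply mul_le_mul_of_nonneg_left _ (abs_nonneg _)
          apply mul_le_mul hinvm hinvk (inv_nonneg.mpr (norm_nonneg _))
            (inv_nonneg.mpr (le_of_lt (hdenpos m y)))
      _ ≤ C * |tn m - tn k| := by
          rw [← mul_inv, ← div_eq_mul_inv]
          have erw : C * (R y)^2 * (|tn m - tn k| / ((R y + tn m) * (R y + tn k)))
              = (C * (R y)^2 * |tn m - tn k|) / ((R y + tn m) * (R y + tn k)) := by ring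
          rw [erw, div_le_iff₀ (mul_pos (hdenpos m y) (hdenpos k y))]
          have hsq : (R y)^2 ≤ (R y + tn m) * (R y + tn k) := by
            nlinarith [hR0 y, htnpos m, htnpos k]
          nlinarith [abs_nonneg (tn m - tn k), hC0, hsq,
            mul_nonneg (mul_nonneg hC0.le (abs_nonneg (tn m - tn k))) (sub_nonneg.mpr hsq)]
  -- Cauchy
  have htne : ∀ j : ℕ, tn j = 1/((j:ℝ)+1) := fun j => by rw [htndef]
  have htn_mono : ∀ {m k : ℕ}, k ≤ m → tn m ≤ tn k := by
    intro m k hkm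
    rw [htne m, htne k]
    have h0 : (0:ℝ) < (k:ℝ)+1 := by positivity
    exact one_div_le_one_div_of_le h0 (by gcongr)
  have hcauchy : CauchySeq gs := by
    apply cauchySeq_of_le_tendsto_0 (fun N => C * tn N)
    · intro m k N hm hk
      rw [dist_eq_norm]
      calc ‖gs m - gs k‖ ≤ C * |tn m - tn k| := hdiff m k
        _ ≤ C * tn N := by
            have h1 : tn m ≤ tn N := htn_mono hm
            have h2 : tn k ≤ tn N := htn_mono hk
            have h3 : |tn m - tn k| ≤ tn N :=
              abs_le.mpr ⟨by linarith [htnpos m, htnpos k], by linarith [htnpos m, htnpos k]⟩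
            exact mul_le_mul_of_nonneg_left h3 hC0.le
    · have h1 : Tendsto tn atTop (𝓝 0) := by
        rw [htndef]; exact tendsto_one_div_add_atTop_nhds_zero_nat
      have h2 := h1.const_mul C
      rw [mul_zero] at h2
      exact h2
  obtain ⟨g, hg⟩ := cauchySeq_tendsto_of_complete hcauchy
  refine ⟨g, h, ?_, hhp, ?_⟩
  · -- g p = 0
    have h1 : Tendsto (fun n => (gs n : C(Y,ℂ)) p) atTop (𝓝 ((g : C(Y,ℂ)) p)) :=
      (((ContinuousMap.evalCLM ℂ p).comp
        (Subalgebra.toSubmodule A).subtypeL).continuous.tendsto g).comp hg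
    have h2 : ∀ n, (gs n : C(Y,ℂ)) p = 0 := by
      intro n; rw [hgsy, hf, zero_mul]
    have h3 : Tendsto (fun n => (gs n : C(Y,ℂ)) p) atTop (𝓝 0) := by
      simp only [h2]; exact tendsto_const_nhds
    exact tendsto_nhds_unique h1 h3
  · -- f = g * h
    have hfd : ∀ n, gs n * h = f - ((tn n : ℝ):ℂ) • gs n := by
      intro n
      have h1 : gs n * (h + ((tn n:ℝ):ℂ) • 1) = f := by
        calc gs n * (h + ((tn n:ℝ):ℂ) • 1) = f * ((h + ((tn n:ℝ):ℂ) • 1) * vs n) := by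
              rw [hgsdef]; ring
          _ = f * 1 := by rw [hvs1]
          _ = f := mul_one f
      have h2 : gs n * h + ((tn n:ℝ):ℂ) • gs n = f := by
        rw [← h1, mul_add, mul_smul_comm, mul_one]
      exact eq_sub_of_add_eq h2
    have hl1 : Tendsto (fun n => gs n * h) atTop (𝓝 (g * h)) := hg.mul tendsto_const_nhds
    have hz : Tendsto (fun n => ((tn n:ℝ):ℂ) • gs n) atTop (𝓝 (0:A)) := by
      apply squeeze_zero_norm (a := fun n => tn n * (C * ‖h‖))
      · intro n
        calc ‖((tn n:ℝ):ℂ) • gs n‖ = |tn n| * ‖gs n‖ := by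
              rw [norm_smul, Complex.norm_real, Real.norm_eq_abs]
          _ ≤ tn n * (C * ‖h‖) := by
              rw [abs_of_pos (htnpos n)]
              exact mul_le_mul_of_nonneg_left (hgnorm n) (htnpos n).le
      · have h1 : Tendsto tn atTop (𝓝 0) := by
          rw [htndef]; exact tendsto_one_div_add_atTop_nhds_zero_nat
        have h2 := h1.mul_const (C * ‖h‖)
        rw [zero_mul] at h2
        exact h2
    have hl2 : Tendsto (fun n => f - ((tn n:ℝ):ℂ) • gs n) atTop (𝓝 f) := by
      have := (tendsto_const_nhds (x := f) (f := atTop)).sub hz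
      simpa using this
    have hl1' : Tendsto (fun n => gs n * h) atTop (𝓝 f) := by
      simp only [hfd]; exact hl2
    exact (tendsto_nhds_unique hl1 hl1').symm

/-- If `A` is a uniform algebra (a closed point-separating subalgebra of
`C(Y, ℂ)`) on a compact Hausdorff space `Y` and `p ∈ Y` is a `p`-point of `A`, then
every point derivation of `A` at `p` is identically zero. -/
theorem stmt0 {Y : Type*} [TopologicalSpace Y] [CompactSpace Y] [T2Space Y]
    (A : Subalgebra ℂ C(Y, ℂ)) (hA : IsClosed (A : Set C(Y, ℂ)))
    (hsep : ∀ y z : Y, y ≠ z → ∃ f ∈ A, f y ≠ f z)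
    (p : Y) (hp : IsPPoint A p)
    (L : ↥A →ₗ[ℂ] ℂ)
    (hL : ∀ f g : ↥A, L (f * g) = (f : C(Y, ℂ)) p * L g + (g : C(Y, ℂ)) p * L f) :
    L = 0 := by
  have hL1 : L 1 = 0 := by
    have h11 := hL 1 1
    rw [one_mul] at h11
    have e : ((1:A) : C(Y,ℂ)) p = 1 := rfl
    rw [e, one_mul] at h11
    exact left_eq_add.mp h11
  apply LinearMap.ext
  intro f
  simp only [LinearMap.zero_apply]
  set c : ℂ := (f : C(Y,ℂ)) p with hc
  have hf0 : ((f - c • 1 : A) : C(Y,ℂ)) p = 0 := by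
    show (f : C(Y,ℂ)) p - c * 1 = 0
    rw [← hc, mul_one, sub_self]
  obtain ⟨g, h, hgp, hhp, hfac⟩ := factor A hA p hp (f - c • 1) hf0
  have h1 : L (f - c • 1) = 0 := by
    rw [hfac, hL g h, hgp, hhp, zero_mul, zero_mul, add_zero]
  have h2 : L f = L (f - c • 1) + c * L 1 := by
    rw [map_sub, map_smul]
    simp only [smul_eq_mul]
    ring
  rw [h2, h1, hL1, mul_zero, add_zero]
end

section
/- Let A be a uniform algebra on a compact Hausdorff space Y and let p ∈ Y be a p-point of A. Then for every f in the maximal ideal I_p = {f ∈ A : f(p) = 0} and every ε > 0 there exists u ∈ I_p with ‖u‖_∞ ≤ 2 and ‖f − fu‖_∞ < ε. -/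
open ContinuousMap

/-- If `A` is a uniform algebra on a compact Hausdorff space `Y` and
`p ∈ Y` is a `p`-point of `A`, then for every `f` in the maximal ideal
`I_p = {f ∈ A : f p = 0}` and every `ε > 0` there is `u ∈ I_p` with `‖u‖ ≤ 2` and
`‖f - f·u‖ < ε`. -/
theorem stmt1 {Y : Type*} [TopologicalSpace Y] [CompactSpace Y] [T2Space Y]
    (A : Subalgebra ℂ C(Y, ℂ)) (hA : IsClosed (A : Set C(Y, ℂ)))
    (hsep : ∀ y z : Y, y ≠ z → ∃ f ∈ A, f y ≠ f z)
    (p : Y) (hp : IsPPoint A p)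
    (f : C(Y, ℂ)) (hf : f ∈ A) (hfp : f p = 0)
    (ε : ℝ) (hε : 0 < ε) :
    ∃ u ∈ A, u p = 0 ∧ ‖u‖ ≤ 2 ∧ ‖f - f * u‖ < ε := by
  classical
  obtain ⟨Ps, hPs, hInt⟩ := hp
  set U : Set Y := {y | ‖f y‖ < ε / 2} with hU
  have hUopen : IsOpen U :=
    isOpen_lt (continuous_norm.comp f.continuous) continuous_const
  have hpU : p ∈ U := by
    simp only [hU, Set.mem_setOf_eq, hfp, norm_zero]
    exact half_pos hε
  have hpP : ∀ P ∈ Ps, p ∈ P := by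
    intro P hP
    have hmem : p ∈ ⋂₀ Ps := by rw [hInt]; exact Set.mem_singleton p
    exact hmem P hP
  have hKcomp : IsCompact Uᶜ := hUopen.isClosed_compl.isCompact
  have hcov : Uᶜ ⊆ ⋃ i : Ps, ((i : Set Y))ᶜ := by
    intro y hy
    by_contra h
    simp only [Set.mem_iUnion, not_exists, Set.mem_compl_iff, not_not] at h
    have hmem : y ∈ ⋂₀ Ps := fun P hP => h ⟨P, hP⟩
    rw [hInt, Set.mem_singleton_iff] at hmem
    exact hy (hmem ▸ hpU)
  obtain ⟨t, ht⟩ := hKcomp.elim_finite_subcover (fun i : Ps => ((i : Set Y))ᶜ)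
    (fun i => (hPs i i.2).1.isOpen_compl) hcov
  choose g hgA hg1 hglt using fun i : Ps => (hPs i i.2).2
  have hgle : ∀ (i : Ps) (y : Y), ‖g i y‖ ≤ 1 := by
    intro i y
    by_cases hy : y ∈ (i : Set Y)
    · simp [hg1 i y hy]
    · exact (hglt i y hy).le
  set G : C(Y, ℂ) := ∏ i ∈ t, g i with hG
  have hGA : G ∈ A := prod_mem fun i _ => hgA i
  have hGapply : ∀ y, G y = ∏ i ∈ t, g i y := fun y => ContinuousMap.prod_apply t g y
  have hGp : G p = 1 := by
    rw [hGapply]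
    exact Finset.prod_eq_one fun i _ => hg1 i p (hpP i i.2)
  have hGle : ∀ y, ‖G y‖ ≤ 1 := by
    intro y
    rw [hGapply, norm_prod]
    exact Finset.prod_le_one (fun i _ => norm_nonneg _) (fun i _ => hgle i y)
  have hGlt : ∀ y ∈ Uᶜ, ‖G y‖ < 1 := by
    intro y hy
    have := ht hy
    simp only [Set.mem_iUnion, Set.mem_compl_iff] at this
    obtain ⟨i, hit, hyi⟩ := this
    rw [hGapply, norm_prod, ← Finset.mul_prod_erase _ _ hit]
    calc ‖g i y‖ * ∏ j ∈ t.erase i, ‖g j y‖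
        ≤ ‖g i y‖ * 1 := by
          exact mul_le_mul_of_nonneg_left
            (Finset.prod_le_one (fun j _ => norm_nonneg _) (fun j _ => hgle j y))
            (norm_nonneg _)
      _ = ‖g i y‖ := mul_one _
      _ < 1 := hglt i y hyi
  obtain ⟨m, hm1, hmK⟩ : ∃ m : ℝ, m < 1 ∧ ∀ y ∈ Uᶜ, ‖G y‖ ≤ m := by
    rcases Set.eq_empty_or_nonempty Uᶜ with h | h
    · exact ⟨0, one_pos, by simp [h]⟩
    · obtain ⟨y₀, hy₀, hmax⟩ := hKcomp.exists_isMaxOn h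
        ((continuous_norm.comp G.continuous).continuousOn)
      exact ⟨‖G y₀‖, hGlt y₀ hy₀, fun y hy => hmax hy⟩
  set m' : ℝ := max m 0 with hm'
  have hm'0 : (0 : ℝ) ≤ m' := le_max_right _ _
  have hm'1 : m' < 1 := max_lt hm1 one_pos
  have hfpos : (0 : ℝ) < ‖f‖ + 1 := by positivity
  obtain ⟨k, hk⟩ := exists_pow_lt_of_lt_one (div_pos hε hfpos) hm'1
  set u : C(Y, ℂ) := 1 - G ^ k with hu
  have huA : u ∈ A := A.sub_mem A.one_mem (pow_mem hGA k)
  have hup : u p = 0 := by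
    simp [hu, ContinuousMap.sub_apply, ContinuousMap.pow_apply, hGp]
  have hunorm : ‖u‖ ≤ 2 := by
    refine (ContinuousMap.norm_le u (by norm_num)).mpr fun y => ?_
    have : ‖(1 : ℂ) - (G y) ^ k‖ ≤ ‖(1 : ℂ)‖ + ‖(G y) ^ k‖ := norm_sub_le _ _
    have h2 : ‖(G y) ^ k‖ ≤ 1 := by
      rw [norm_pow]
      exact pow_le_one₀ (norm_nonneg _) (hGle y)
    calc ‖u y‖ = ‖(1 : ℂ) - (G y) ^ k‖ := by
          simp [hu, ContinuousMap.sub_apply, ContinuousMap.pow_apply]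
      _ ≤ ‖(1 : ℂ)‖ + ‖(G y) ^ k‖ := norm_sub_le _ _
      _ ≤ 1 + 1 := by rw [norm_one]; exact add_le_add le_rfl h2
      _ = 2 := by norm_num
  have hfu : f - f * u = f * G ^ k := by rw [hu]; ring
  have hmk : m' ^ k * ‖f‖ < ε := by
    calc m' ^ k * ‖f‖ ≤ m' ^ k * (‖f‖ + 1) :=
          mul_le_mul_of_nonneg_left (by linarith) (pow_nonneg hm'0 k)
      _ < ε / (‖f‖ + 1) * (‖f‖ + 1) := mul_lt_mul_of_pos_right hk hfpos
      _ = ε := div_mul_cancel₀ ε (ne_of_gt hfpos)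
  have hc : ‖f * G ^ k‖ ≤ max (ε / 2) (m' ^ k * ‖f‖) := by
    refine (ContinuousMap.norm_le _ (le_max_of_le_left (half_pos hε).le)).mpr fun y => ?_
    have hy' : ‖(f * G ^ k) y‖ = ‖f y‖ * ‖G y‖ ^ k := by
      simp [ContinuousMap.mul_apply, ContinuousMap.pow_apply, norm_mul, norm_pow]
    rw [hy']
    by_cases hyU : y ∈ U
    · refine le_max_of_le_left ?_
      calc ‖f y‖ * ‖G y‖ ^ k ≤ (ε / 2) * 1 := by
            refine mul_le_mul ?_ ?_ (by positivity) (half_pos hε).le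
            · exact le_of_lt hyU
            · exact pow_le_one₀ (norm_nonneg _) (hGle y)
        _ = ε / 2 := mul_one _
    · refine le_max_of_le_right ?_
      have h1 : ‖G y‖ ≤ m' := by
        exact le_trans (hmK y hyU) (le_max_left _ _)
      calc ‖f y‖ * ‖G y‖ ^ k ≤ ‖f‖ * m' ^ k := by
            refine mul_le_mul (f.norm_coe_le_norm y)
              (pow_le_pow_left₀ (norm_nonneg _) h1 k) (by positivity) (norm_nonneg _)
        _ = m' ^ k * ‖f‖ := mul_comm _ _
  refine ⟨u, huA, hup, hunorm, ?_⟩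
  rw [hfu]
  exact lt_of_le_of_lt hc (max_lt (half_lt_self hε) hmk)
end

section
/- Let A be a uniform algebra on a compact Hausdorff space Y and let p ∈ Y be a p-point of A. Then every f in the maximal ideal I_p = {f ∈ A : f(p) = 0} factors as f = f₁ f₂ with f₁, f₂ ∈ I_p. -/
set_option synthInstance.maxHeartbeats 1000000
set_option maxHeartbeats 1000000
open scoped Classical
open ContinuousMap

lemma normsq_helper (z : ℂ) : ‖z‖^2 = z.re^2 + z.im^2 := by
  rw [Complex.sq_norm, Complex.normSq_apply]; ring

lemma hre_norm' (z : ℂ) : z.re ≤ ‖z‖ := by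
  exact Complex.re_le_norm _

lemma aux_peak {Y : Type*} [TopologicalSpace Y] [CompactSpace Y]
    (A : Subalgebra ℂ C(Y, ℂ)) (p : Y) (hp : IsPPoint A p)
    (U : Set Y) (hU : IsOpen U) (hpU : p ∈ U) :
    ∃ u ∈ A, u p = 1 ∧ (∀ y, ‖u y‖ ≤ 1) ∧ ∀ y ∉ U, ‖u y‖ ≤ 1/2 := by
  obtain ⟨Ps, hPs, hI⟩ := hp
  have hpP : ∀ P ∈ Ps, p ∈ P := by
    intro P hP
    have : p ∈ ⋂₀ Ps := by rw [hI]; exact rfl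
    exact this P hP
  -- choose peak functions
  have hch : ∀ P : Ps, ∃ g : C(Y, ℂ), g ∈ A ∧ (∀ y ∈ (P : Set Y), g y = 1) ∧
      ∀ y ∉ (P : Set Y), ‖g y‖ < 1 := by
    rintro ⟨P, hP⟩
    obtain ⟨g, hgA, h1, h2⟩ := (hPs P hP).2
    exact ⟨g, hgA, h1, h2⟩
  choose G hGA hG1 hG2 using hch
  -- compactness: finite subfamily
  have hK : IsCompact (Uᶜ) := (hU.isClosed_compl).isCompact
  have hclosed : ∀ P : Ps, IsClosed (P : Set Y) := fun P => (hPs P P.2).1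
  have hempty : (Uᶜ ∩ ⋂ P : Ps, (P : Set Y)) = ∅ := by
    have : (⋂ P : Ps, (P : Set Y)) = {p} := by rw [← hI, Set.sInter_eq_iInter]
    rw [this]
    ext y; simp only [Set.mem_inter_iff, Set.mem_compl_iff, Set.mem_singleton_iff,
      Set.mem_empty_iff_false, iff_false]
    rintro ⟨hy, rfl⟩; exact hy hpU
  obtain ⟨t, ht⟩ := hK.elim_finite_subfamily_closed _ hclosed hempty
  -- the product of the peak functions
  set g : C(Y, ℂ) := ∏ i ∈ t, G i with hg
  have hgA' : g ∈ A := prod_mem fun i _ => hGA i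
  have hgy : ∀ y, g y = ∏ i ∈ t, G i y := by
    intro y; simp [hg]
  have hgp : g p = 1 := by
    rw [hgy]
    exact Finset.prod_eq_one fun i _ => hG1 i p (hpP i i.2)
  have hg_le : ∀ y, ‖g y‖ ≤ 1 := by
    intro y
    rw [hgy]
    calc ‖∏ i ∈ t, G i y‖ = ∏ i ∈ t, ‖G i y‖ := by
          simp [norm_prod]
      _ ≤ 1 := Finset.prod_le_one (fun i _ => norm_nonneg _) (fun i _ => by
          by_cases hy : y ∈ (i : Set Y)
          · rw [hG1 i y hy]; simp
          · exact (hG2 i y hy).le)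
  have hg_lt : ∀ y ∈ Uᶜ, ‖g y‖ < 1 := by
    intro y hy
    have hmem : y ∉ ⋂ i ∈ t, (i : Set Y) := by
      intro hmem
      have : y ∈ (∅ : Set Y) := ht ▸ Set.mem_inter hy hmem
      exact this
    simp only [Set.mem_iInter, not_forall] at hmem
    obtain ⟨i, hit, hyi⟩ := hmem
    have hfac : ∀ j : Ps, ‖G j y‖ ≤ 1 := by
      intro j
      by_cases hyj : y ∈ (j : Set Y)
      · rw [hG1 j y hyj]; simp
      · exact (hG2 j y hyj).le
    rw [hgy]
    have : ∏ j ∈ t, ‖G j y‖ ≤ ‖G i y‖ * 1 := by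
      rw [← Finset.mul_prod_erase t _ hit]
      exact mul_le_mul_of_nonneg_left
        (Finset.prod_le_one (fun j _ => norm_nonneg _) (fun j _ => hfac j)) (norm_nonneg _)
    calc ‖∏ j ∈ t, G j y‖ = ∏ j ∈ t, ‖G j y‖ := by simp [norm_prod]
      _ ≤ ‖G i y‖ * 1 := this
      _ < 1 := by
          rw [mul_one]; exact hG2 i y hyi
  -- now raise to a power
  rcases Set.eq_empty_or_nonempty (Uᶜ) with hKe | hKne
  · refine ⟨g, hgA', hgp, hg_le, ?_⟩
    intro y hy
    exact absurd (show y ∈ Uᶜ from hy) (by rw [hKe]; exact id)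
  · obtain ⟨x₀, hx₀K, hx₀⟩ := hK.exists_isMaxOn hKne
      (continuous_norm.comp g.continuous).continuousOn
    have hc : ‖g x₀‖ < 1 := hg_lt x₀ hx₀K
    obtain ⟨N, hN⟩ := exists_pow_lt_of_lt_one (show (0:ℝ) < 1/2 by norm_num) hc
    refine ⟨g ^ N, pow_mem hgA' N, ?_, ?_, ?_⟩
    · have : (g ^ N) p = (g p) ^ N := by simp
      rw [this, hgp, one_pow]
    · intro y
      have : (g ^ N) y = (g y) ^ N := by simp
      rw [this, norm_pow]
      exact pow_le_one₀ (norm_nonneg _) (hg_le y)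
    · intro y hy
      have h1 : (g ^ N) y = (g y) ^ N := by simp
      rw [h1, norm_pow]
      calc ‖g y‖ ^ N ≤ ‖g x₀‖ ^ N :=
            pow_le_pow_left₀ (norm_nonneg _) (hx₀ hy) N
        _ ≤ 1/2 := hN.le

lemma aux_inv {Y : Type*} [TopologicalSpace Y] [CompactSpace Y]
    (A : Subalgebra ℂ C(Y, ℂ)) (hA : IsClosed (A : Set C(Y, ℂ)))
    (v : C(Y, ℂ)) (hv : v ∈ A) (ε : ℝ) (hε : 0 < ε) (hε3 : ε ≤ 3)
    (hRe : ∀ y, ε ≤ (v y).re) (hbd : ∀ y, ‖v y‖ ≤ 3) :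
    ∃ b ∈ A, ∀ y, v y * b y = 1 := by
  haveI : CompleteSpace ↥A := hA.completeSpace_coe
  set R : ℝ := 9 / ε with hR
  have hRpos : 0 < R := by positivity
  have hRne : (R : ℂ) ≠ 0 := by
    simp only [ne_eq, Complex.ofReal_eq_zero]; positivity
  set a : ↥A := ⟨v, hv⟩ with ha
  set t : ↥A := 1 - ((R:ℂ))⁻¹ • a with htdef
  -- bound on ‖t‖
  set δ : ℝ := ε^2/9 with hδ
  have hδ0 : 0 < δ := by positivity
  have hδ1 : δ ≤ 1 := by
    rw [hδ]; nlinarith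
  have htnorm : ∀ y, ‖((t : C(Y,ℂ))) y‖ ≤ Real.sqrt (1 - δ) := by
    intro y
    have htval : ((t : C(Y,ℂ))) y = 1 - (R:ℂ)⁻¹ * v y := by
      simp [htdef, ha]
    rw [htval]
    rw [show ((R:ℂ))⁻¹ = ((R⁻¹ : ℝ) : ℂ) by push_cast; ring]
    have hsq : ‖1 - ((R⁻¹:ℝ):ℂ) * v y‖^2 ≤ 1 - δ := by
      rw [normsq_helper]
      have h1 : (1 - ((R⁻¹:ℝ):ℂ) * v y).re = 1 - R⁻¹ * (v y).re := by
        simp [Complex.sub_re, Complex.mul_re]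
      have h2 : (1 - ((R⁻¹:ℝ):ℂ) * v y).im = - (R⁻¹ * (v y).im) := by
        simp [Complex.sub_im, Complex.mul_im]
      rw [h1, h2]
      have hre := hRe y
      have hb := hbd y
      have hb2 : (v y).re^2 + (v y).im^2 ≤ 9 := by
        have := normsq_helper (v y)
        nlinarith [norm_nonneg (v y)]
      have hRinv : R⁻¹ = ε / 9 := by
        rw [hR]; field_simp
      rw [hRinv]
      have hre2 : (v y).re ≥ ε := hre
      rw [hδ]
      nlinarith [sq_nonneg (v y).im, sq_nonneg ((v y).re - ε)]
    nlinarith [Real.sq_sqrt (by linarith : (0:ℝ) ≤ 1 - δ), Real.sqrt_nonneg (1 - δ),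
      norm_nonneg (1 - ((R⁻¹:ℝ):ℂ) * v y), sq_nonneg (‖1 - ((R⁻¹:ℝ):ℂ) * v y‖ - Real.sqrt (1-δ))]
  have htlt : ‖t‖ < 1 := by
    have h1 : ‖(t : C(Y,ℂ))‖ ≤ Real.sqrt (1 - δ) := by
      apply (ContinuousMap.norm_le _ (Real.sqrt_nonneg _)).2 htnorm
    have h2 : Real.sqrt (1 - δ) < 1 := by
      rw [Real.sqrt_lt' (by norm_num)]
      nlinarith
    exact lt_of_le_of_lt h1 h2
  -- the unit
  have hval : (Units.oneSub t htlt).val = (R:ℂ)⁻¹ • a := by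
    simp [Units.oneSub, htdef]
  have hunit1 : IsUnit ((R:ℂ)⁻¹ • a) := ⟨Units.oneSub t htlt, hval⟩
  have hunita : IsUnit a := by
    have : a = ((R:ℂ) • (1:↥A)) * ((R:ℂ)⁻¹ • a) := by
      rw [smul_mul_smul_comm]
      rw [mul_inv_cancel₀ hRne]
      simp
    rw [this]
    apply IsUnit.mul _ hunit1
    have : ((R:ℂ) • (1:↥A)) = algebraMap ℂ ↥A (R:ℂ) := by
      rw [Algebra.algebraMap_eq_smul_one]
    rw [this]
    exact (isUnit_iff_ne_zero.2 hRne).map (algebraMap ℂ ↥A)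
  obtain ⟨b, hb⟩ := hunita.exists_right_inv
  refine ⟨(b : C(Y,ℂ)), b.2, ?_⟩
  intro y
  have : ((a * b : ↥A) : C(Y,ℂ)) = ((1 : ↥A) : C(Y,ℂ)) := by rw [hb]
  have h2 : (v * (b : C(Y,ℂ))) = (1 : C(Y,ℂ)) := by
    simpa [ha] using this
  have := ContinuousMap.congr_fun h2 y
  simpa using this

/-- If `A` is a uniform algebra on a compact Hausdorff space `Y` and
`p ∈ Y` is a `p`-point of `A`, then every `f` in the maximal ideal
`I_p = {f ∈ A : f p = 0}` factors as `f = f₁ · f₂` with `f₁, f₂ ∈ I_p`. -/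
theorem stmt2 {Y : Type*} [TopologicalSpace Y] [CompactSpace Y] [T2Space Y]
    (A : Subalgebra ℂ C(Y, ℂ)) (hA : IsClosed (A : Set C(Y, ℂ)))
    (hsep : ∀ y z : Y, y ≠ z → ∃ f ∈ A, f y ≠ f z)
    (p : Y) (hp : IsPPoint A p)
    (f : C(Y, ℂ)) (hf : f ∈ A) (hfp : f p = 0) :
    ∃ f₁ ∈ A, ∃ f₂ ∈ A, f₁ p = 0 ∧ f₂ p = 0 ∧ f = f₁ * f₂ := by
  classical
  haveI : CompleteSpace ↥A := hA.completeSpace_coe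
  set C : ℝ := 64 * (‖f‖ + 1) with hC
  have hC64 : (64:ℝ) ≤ C := by
    have := norm_nonneg f; rw [hC]; nlinarith
  have hCpos : 0 < C := by linarith
  -- neighborhoods
  set V : ℕ → Set Y := fun k => {y | ‖f y‖ < (4:ℝ)⁻¹ ^ k} with hV
  have hVopen : ∀ k, IsOpen (V k) := fun k => isOpen_lt (f.continuous.norm) continuous_const
  have hpV : ∀ k, p ∈ V k := by
    intro k
    simp only [hV, Set.mem_setOf_eq, hfp, norm_zero]
    positivity
  have hch : ∀ k, ∃ u ∈ A, u p = 1 ∧ (∀ y, ‖u y‖ ≤ 1) ∧ ∀ y ∉ V k, ‖u y‖ ≤ 1/2 :=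
    fun k => aux_peak A p hp (V k) (hVopen k) (hpV k)
  choose u huA hup hu1 huhalf using hch
  -- the series
  set w : ℕ → C(Y,ℂ) := fun k => ((2:ℂ)⁻¹)^(k+1) • ((1 : C(Y,ℂ)) - u k) with hw
  have hwA : ∀ k, w k ∈ A := fun k => A.smul_mem (A.sub_mem A.one_mem (huA k)) _
  have hwval : ∀ k y, w k y = (((2:ℝ)⁻¹^(k+1) : ℝ) : ℂ) * (1 - u k y) := by
    intro k y
    simp only [hw, ContinuousMap.smul_apply, ContinuousMap.sub_apply, ContinuousMap.one_apply,
      smul_eq_mul]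
    push_cast
    ring
  have hwnorm_pt : ∀ k y, ‖w k y‖ ≤ (2:ℝ)⁻¹ ^ k := by
    intro k y
    rw [hwval]
    rw [norm_mul]
    have h1 : ‖(((2:ℝ)⁻¹^(k+1) : ℝ) : ℂ)‖ = (2:ℝ)⁻¹^(k+1) := by
      rw [Complex.norm_real, Real.norm_eq_abs, abs_of_pos (by positivity)]
    rw [h1]
    have h2 : ‖1 - u k y‖ ≤ 2 := by
      calc ‖1 - u k y‖ ≤ ‖(1:ℂ)‖ + ‖u k y‖ := norm_sub_le _ _
        _ ≤ 1 + 1 := by rw [norm_one]; linarith [hu1 k y]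
        _ = 2 := by norm_num
    calc (2:ℝ)⁻¹^(k+1) * ‖1 - u k y‖ ≤ (2:ℝ)⁻¹^(k+1) * 2 := by
          apply mul_le_mul_of_nonneg_left h2 (by positivity)
      _ = (2:ℝ)⁻¹^k := by rw [pow_succ]; ring
  have hwnorm : ∀ k, ‖w k‖ ≤ (2:ℝ)⁻¹ ^ k := fun k =>
    (ContinuousMap.norm_le _ (by positivity)).2 (hwnorm_pt k)
  have hsum : Summable w :=
    Summable.of_norm_bounded (summable_geometric_of_lt_one (by norm_num) (by norm_num)) hwnorm
  set f₁ : C(Y,ℂ) := ∑' k, w k with hf₁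
  have hf₁A : f₁ ∈ A := by
    refine hA.mem_of_tendsto hsum.hasSum.tendsto_sum_nat ?_
    exact Filter.Eventually.of_forall fun n => sum_mem fun k _ => hwA k
  have hptsum : ∀ y, HasSum (fun k => w k y) (f₁ y) := fun y =>
    hsum.hasSum.mapL (ContinuousMap.evalCLM ℂ y)
  have hre_term : ∀ k y, (w k y).re = (2:ℝ)⁻¹^(k+1) * (1 - (u k y).re) := by
    intro k y
    rw [hwval, Complex.re_ofReal_mul]
    simp [Complex.sub_re]
  have hre_le : ∀ k y, (u k y).re ≤ ‖u k y‖ := by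
    intro k y
    exact Complex.re_le_norm _
  have hre_nonneg : ∀ k y, 0 ≤ (w k y).re := by
    intro k y
    rw [hre_term]
    have h1 := hre_le k y
    have h2 := hu1 k y
    have : (0:ℝ) < (2:ℝ)⁻¹^(k+1) := by positivity
    nlinarith
  have hre_sum : ∀ y, HasSum (fun k => (w k y).re) ((f₁ y).re) := fun y =>
    (hptsum y).mapL Complex.reCLM
  have hre_f1 : ∀ y, 0 ≤ (f₁ y).re := by
    intro y
    rw [← (hre_sum y).tsum_eq]
    exact tsum_nonneg fun k => hre_nonneg k y
  have hre_lb : ∀ k y, y ∉ V k → (2:ℝ)⁻¹^(k+2) ≤ (f₁ y).re := by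
    intro k y hy
    have h1 : (2:ℝ)⁻¹^(k+2) ≤ (w k y).re := by
      rw [hre_term]
      have h2 := huhalf k y hy
      have h3 : (u k y).re ≤ 1/2 := le_trans (hre_le k y) h2
      have h4 : (2:ℝ)⁻¹^(k+2) = (2:ℝ)⁻¹^(k+1) * (1/2) := by rw [pow_succ]; ring
      rw [h4]
      apply mul_le_mul_of_nonneg_left (by linarith) (by positivity)
    calc (2:ℝ)⁻¹^(k+2) ≤ (w k y).re := h1
      _ ≤ ∑' j, (w j y).re := (hre_sum y).summable.le_tsum k fun j _ => hre_nonneg j y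
      _ = (f₁ y).re := (hre_sum y).tsum_eq
  have hf1p : f₁ p = 0 := by
    have hz : ∀ k, w k p = 0 := by
      intro k
      rw [hwval, hup k]
      simp
    have : HasSum (fun k => w k p) 0 := by
      simpa [hz] using hasSum_zero (α := ℂ) (β := ℕ)
    exact (hptsum p).unique this
  have hgeo : Summable (fun k => (2:ℝ)⁻¹^k) :=
    summable_geometric_of_lt_one (by norm_num) (by norm_num)
  have hf1_le : ∀ y, ‖f₁ y‖ ≤ 2 := by
    intro y
    have h0 : Summable (fun k => ‖w k y‖) :=
      Summable.of_norm_bounded hgeo fun k => by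
        simpa [Real.norm_eq_abs, abs_of_nonneg (norm_nonneg _)] using hwnorm_pt k y
    rw [← (hptsum y).tsum_eq]
    calc ‖∑' k, w k y‖ ≤ ∑' k, ‖w k y‖ := norm_tsum_le_tsum_norm h0
      _ ≤ ∑' k, (2:ℝ)⁻¹^k := Summable.tsum_le_tsum (fun k => hwnorm_pt k y) h0 hgeo
      _ = 2 := by rw [tsum_geometric_of_lt_one (by norm_num) (by norm_num)]; norm_num
  -- the key quadratic estimate
  have hre_norm : ∀ y, (f₁ y).re ≤ ‖f₁ y‖ := by
    intro y; exact Complex.re_le_norm _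
  have hkey : ∀ y, ‖f y‖ ≤ C * ‖f₁ y‖^2 := by
    intro y
    by_cases hall : ∀ k, y ∈ V k
    · have htend : Filter.Tendsto (fun k : ℕ => (4:ℝ)⁻¹^k) Filter.atTop (nhds 0) :=
        tendsto_pow_atTop_nhds_zero_of_lt_one (by norm_num) (by norm_num)
      have h0 : ‖f y‖ ≤ 0 := ge_of_tendsto' htend fun k => (hall k).le
      have : (0:ℝ) ≤ C * ‖f₁ y‖^2 := by positivity
      linarith
    · push_neg at hall
      set k₀ := Nat.find hall with hk₀def
      have hk₀ : y ∉ V k₀ := Nat.find_spec hall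
      have hfl : (2:ℝ)⁻¹^(k₀+2) ≤ ‖f₁ y‖ := le_trans (hre_lb k₀ y hk₀) (hre_norm y)
      have hsq : (4:ℝ)⁻¹^(k₀+2) ≤ ‖f₁ y‖^2 := by
        have h1 : ((2:ℝ)⁻¹^(k₀+2))^2 = (4:ℝ)⁻¹^(k₀+2) := by
          rw [← pow_mul, mul_comm, pow_mul]; norm_num
        rw [← h1]
        apply pow_le_pow_left₀ (by positivity) hfl
      rcases Nat.eq_zero_or_pos k₀ with hk0 | hk0
      · have h1 : ‖f y‖ ≤ ‖f‖ := f.norm_coe_le_norm y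
        have h2 : (4:ℝ)⁻¹^(k₀+2) = 1/16 := by rw [hk0]; norm_num
        rw [h2] at hsq
        calc ‖f y‖ ≤ ‖f‖ := h1
          _ ≤ C * (1/16) := by rw [hC]; nlinarith [norm_nonneg f]
          _ ≤ C * ‖f₁ y‖^2 := by nlinarith
      · obtain ⟨j, hj⟩ := Nat.exists_eq_succ_of_ne_zero (Nat.pos_iff_ne_zero.1 hk0)
        have hyVj : y ∈ V j := by
          by_contra hcon
          have hle : k₀ ≤ j := Nat.find_le hcon
          omega
        have h1 : ‖f y‖ < (4:ℝ)⁻¹^j := hyVj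
        have h2 : (4:ℝ)⁻¹^j = 64 * (4:ℝ)⁻¹^(k₀+2) := by
          rw [hj, show j.succ+2 = j+3 by omega, pow_add]
          ring_nf
        calc ‖f y‖ ≤ (4:ℝ)⁻¹^j := h1.le
          _ = 64 * (4:ℝ)⁻¹^(k₀+2) := h2
          _ ≤ 64 * ‖f₁ y‖^2 := by nlinarith
          _ ≤ C * ‖f₁ y‖^2 := by nlinarith [sq_nonneg ‖f₁ y‖]
  -- the inverses
  set ε : ℕ → ℝ := fun n => ((n:ℝ)+1)⁻¹ with hε
  have hεpos : ∀ n, 0 < ε n := by intro n; rw [hε]; positivity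
  have hεle1 : ∀ n, ε n ≤ 1 := by
    intro n
    rw [hε]
    rw [inv_le_one_iff₀]
    right
    have : (0:ℝ) ≤ (n:ℝ) := Nat.cast_nonneg n
    linarith
  have hinv : ∀ n : ℕ, ∃ b ∈ A, ∀ y, (f₁ y + ((ε n : ℝ) : ℂ)) * b y = 1 := by
    intro n
    have hv : f₁ + ((ε n : ℝ) : ℂ) • (1 : C(Y,ℂ)) ∈ A :=
      A.add_mem hf₁A (A.smul_mem A.one_mem _)
    have hval : ∀ y, (f₁ + ((ε n : ℝ) : ℂ) • (1 : C(Y,ℂ))) y = f₁ y + ((ε n : ℝ) : ℂ) := by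
      intro y; simp
    obtain ⟨b, hbA, hb⟩ := aux_inv A hA _ hv (ε n) (hεpos n) (by linarith [hεle1 n])
      (fun y => by
        rw [hval]
        simp only [Complex.add_re, Complex.ofReal_re]
        linarith [hre_f1 y])
      (fun y => by
        rw [hval]
        calc ‖f₁ y + ((ε n : ℝ) : ℂ)‖ ≤ ‖f₁ y‖ + ‖((ε n : ℝ) : ℂ)‖ := norm_add_le _ _
          _ ≤ 2 + 1 := by
              apply add_le_add (hf1_le y)
              rw [Complex.norm_real, Real.norm_eq_abs, abs_of_pos (hεpos n)]
              exact hεle1 n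
          _ = 3 := by norm_num)
    refine ⟨b, hbA, ?_⟩
    intro y
    have := hb y
    rwa [hval] at this
  choose b hbA hbeq using hinv
  -- pointwise facts about the inverses
  have hfacts : ∀ n y, ((f₁ y + ((ε n:ℝ):ℂ))⁻¹ = b n y) ∧ ε n ≤ ‖f₁ y + ((ε n:ℝ):ℂ)‖ ∧
      ‖f₁ y‖ ≤ ‖f₁ y + ((ε n:ℝ):ℂ)‖ := by
    intro n y
    have key := hbeq n y
    have hre : (f₁ y + ((ε n:ℝ):ℂ)).re = (f₁ y).re + ε n := by simp
    have him : (f₁ y + ((ε n:ℝ):ℂ)).im = (f₁ y).im := by simp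
    refine ⟨inv_eq_of_mul_eq_one_right key, ?_, ?_⟩
    · calc ε n ≤ (f₁ y + ((ε n:ℝ):ℂ)).re := by rw [hre]; linarith [hre_f1 y]
        _ ≤ ‖f₁ y + ((ε n:ℝ):ℂ)‖ := hre_norm' _
    · have e1 := normsq_helper (f₁ y)
      have e2 := normsq_helper (f₁ y + ((ε n:ℝ):ℂ))
      rw [hre, him] at e2
      have hsq : ‖f₁ y‖^2 ≤ ‖f₁ y + ((ε n:ℝ):ℂ)‖^2 := by
        nlinarith [hre_f1 y, hεpos n]
      have h4 := Real.sqrt_le_sqrt hsq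
      rwa [Real.sqrt_sq (norm_nonneg _), Real.sqrt_sq (norm_nonneg _)] at h4
  -- Cauchy estimate
  have hfzero : ∀ y, f₁ y = 0 → f y = 0 := by
    intro y hz
    have h1 := hkey y
    rw [hz] at h1
    simp only [norm_zero] at h1
    have := norm_nonneg (f y)
    have : ‖f y‖ = 0 := by nlinarith
    exact norm_eq_zero.1 this
  have hdiff_pt : ∀ n m y, ‖f y * (b n y - b m y)‖ ≤ C * (ε n + ε m) := by
    intro n m y
    rcases eq_or_ne (f₁ y) 0 with hz | hz
    · rw [hfzero y hz]
      simp only [zero_mul, norm_zero]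
      have := hεpos n; have := hεpos m
      positivity
    · obtain ⟨hb1n, h2n, h3n⟩ := hfacts n y
      obtain ⟨hb1m, h2m, h3m⟩ := hfacts m y
      have hzpos : 0 < ‖f₁ y‖ := norm_pos_iff.2 hz
      have hnen : f₁ y + ((ε n:ℝ):ℂ) ≠ 0 :=
        norm_pos_iff.1 (lt_of_lt_of_le hzpos h3n)
      have hnem : f₁ y + ((ε m:ℝ):ℂ) ≠ 0 :=
        norm_pos_iff.1 (lt_of_lt_of_le hzpos h3m)
      have hdiff : b n y - b m y = (((ε m:ℝ):ℂ) - ((ε n:ℝ):ℂ)) *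
          ((f₁ y + ((ε n:ℝ):ℂ))⁻¹ * (f₁ y + ((ε m:ℝ):ℂ))⁻¹) := by
        rw [← hb1n, ← hb1m]
        field_simp
        ring
      rw [hdiff, norm_mul, norm_mul, norm_mul, norm_inv, norm_inv]
      have hcast : ‖((ε m:ℝ):ℂ) - ((ε n:ℝ):ℂ)‖ = |ε m - ε n| := by
        rw [← Complex.ofReal_sub, Complex.norm_real, Real.norm_eq_abs]
      rw [hcast]
      have habs : |ε m - ε n| ≤ ε n + ε m := by
        rw [abs_le]
        constructor <;> [linarith [hεpos m, hεpos n]; linarith [hεpos m, hεpos n]]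
      calc ‖f y‖ * (|ε m - ε n| * (‖f₁ y + ((ε n:ℝ):ℂ)‖⁻¹ * ‖f₁ y + ((ε m:ℝ):ℂ)‖⁻¹))
          ≤ (C * ‖f₁ y‖^2) * ((ε n + ε m) * (‖f₁ y‖⁻¹ * ‖f₁ y‖⁻¹)) := by
            apply mul_le_mul (hkey y) ?_ (by positivity) (by positivity)
            apply mul_le_mul habs ?_ (by positivity) (by positivity)
            apply mul_le_mul (inv_anti₀ hzpos h3n) (inv_anti₀ hzpos h3m)
              (by positivity) (by positivity)
        _ = C * (ε n + ε m) := by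
            have hne2 : ‖f₁ y‖ ≠ 0 := by
              exact hzpos.ne'
            field_simp
  have hstep2 : ∀ n y, ‖f y - f₁ y * (f y * b n y)‖ ≤ 2 * C * ε n := by
    intro n y
    have key := hbeq n y
    have hrw : f y - f₁ y * (f y * b n y) = f y * (((ε n:ℝ):ℂ) * b n y) := by
      linear_combination (-(f y)) * key
    rw [hrw]
    rcases eq_or_ne (f₁ y) 0 with hz | hz
    · rw [hfzero y hz]
      simp only [zero_mul, norm_zero]
      have := hεpos n
      positivity
    · obtain ⟨hb1n, h2n, h3n⟩ := hfacts n y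
      have hzpos : 0 < ‖f₁ y‖ := norm_pos_iff.2 hz
      rw [norm_mul, norm_mul, ← hb1n, norm_inv]
      have hcast : ‖((ε n:ℝ):ℂ)‖ = ε n := by
        rw [Complex.norm_real, Real.norm_eq_abs, abs_of_pos (hεpos n)]
      rw [hcast]
      calc ‖f y‖ * (ε n * ‖f₁ y + ((ε n:ℝ):ℂ)‖⁻¹)
          ≤ (C * ‖f₁ y‖^2) * (ε n * ‖f₁ y‖⁻¹) := by
            apply mul_le_mul (hkey y) ?_ (by positivity) (by positivity)
            apply mul_le_mul le_rfl (inv_anti₀ hzpos h3n) (by positivity) (hεpos n).le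
        _ = C * ε n * ‖f₁ y‖ := by
            have hne2 : ‖f₁ y‖ ≠ 0 := by
              exact hzpos.ne'
            field_simp
        _ ≤ C * ε n * 2 := by
            apply mul_le_mul_of_nonneg_left (hf1_le y) (by positivity)
        _ = 2 * C * ε n := by ring
  -- the sequence in the Banach algebra
  set fA : ↥A := ⟨f, hf⟩ with hfA
  set bA : ℕ → ↥A := fun n => ⟨b n, hbA n⟩ with hbAdef
  set g : ℕ → ↥A := fun n => fA * bA n with hg
  have hgcoe : ∀ n, ((g n : ↥A) : C(Y,ℂ)) = f * b n := by
    intro n; simp [hg, hfA, hbAdef]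
  have hgnorm : ∀ n m, ‖g n - g m‖ ≤ C * (ε n + ε m) := by
    intro n m
    have hco : ((g n - g m : ↥A) : C(Y,ℂ)) = f * (b n - b m) := by
      push_cast [hgcoe]
      ring
    have : ‖g n - g m‖ = ‖f * (b n - b m)‖ := by
      rw [show ‖g n - g m‖ = ‖((g n - g m : ↥A) : C(Y,ℂ))‖ from rfl, hco]
    rw [this]
    apply (ContinuousMap.norm_le _ (by positivity)).2
    intro y
    simpa using hdiff_pt n m y
  have hεmono : ∀ N n, N ≤ n → ε n ≤ ((N:ℝ)+1)⁻¹ := by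
    intro N n hn
    rw [hε]
    apply inv_anti₀ (by positivity)
    have : (N:ℝ) ≤ (n:ℝ) := Nat.cast_le.2 hn
    linarith
  have hcauchy : CauchySeq g := by
    refine cauchySeq_of_le_tendsto_0 (fun N => 2 * C * ((N:ℝ)+1)⁻¹) ?_ ?_
    · intro n m N hn hm
      rw [dist_eq_norm]
      refine le_trans (hgnorm n m) ?_
      have h1 := hεmono N n hn
      have h2 := hεmono N m hm
      have h3 : ε n + ε m ≤ 2 * ((N:ℝ)+1)⁻¹ := by linarith
      calc C * (ε n + ε m) ≤ C * (2 * ((N:ℝ)+1)⁻¹) :=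
            mul_le_mul_of_nonneg_left h3 hCpos.le
        _ = 2 * C * ((N:ℝ)+1)⁻¹ := by ring
    · have h1 : Filter.Tendsto (fun N : ℕ => ((N:ℝ)+1)⁻¹) Filter.atTop (nhds 0) := by
        simpa [one_div] using tendsto_one_div_add_atTop_nhds_zero_nat (𝕜 := ℝ)
      have h2 := h1.const_mul (2*C)
      simpa using h2
  obtain ⟨gl, hgl⟩ := cauchySeq_tendsto_of_complete hcauchy
  have hcoe : Filter.Tendsto (fun n => ((g n : ↥A) : C(Y,ℂ))) Filter.atTop
      (nhds ((gl : ↥A) : C(Y,ℂ))) := ((continuous_subtype_val.tendsto gl).comp hgl)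
  have hmul : Filter.Tendsto (fun n => f₁ * ((g n : ↥A) : C(Y,ℂ))) Filter.atTop
      (nhds (f₁ * ((gl : ↥A) : C(Y,ℂ)))) := hcoe.const_mul f₁
  have hto_f : Filter.Tendsto (fun n => f₁ * ((g n : ↥A) : C(Y,ℂ))) Filter.atTop (nhds f) := by
    rw [tendsto_iff_norm_sub_tendsto_zero]
    apply squeeze_zero (fun n => norm_nonneg _) (g := fun n => 2 * C * ε n)
    · intro n
      rw [hgcoe]
      apply (ContinuousMap.norm_le _ (by positivity)).2
      intro y
      have := hstep2 n y
      simp only [ContinuousMap.sub_apply, ContinuousMap.mul_apply]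
      rw [← norm_neg]
      simpa [neg_sub] using this
    · have h1 : Filter.Tendsto (fun n : ℕ => ((n:ℝ)+1)⁻¹) Filter.atTop (nhds 0) := by
        simpa [one_div] using tendsto_one_div_add_atTop_nhds_zero_nat (𝕜 := ℝ)
      have h2 := h1.const_mul (2*C)
      simpa [hε] using h2
  have hfeq : f = f₁ * ((gl : ↥A) : C(Y,ℂ)) := tendsto_nhds_unique hto_f hmul
  have hglp : ((gl : ↥A) : C(Y,ℂ)) p = 0 := by
    have h1 : Filter.Tendsto (fun n => ((g n : ↥A) : C(Y,ℂ)) p) Filter.atTop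
        (nhds (((gl : ↥A) : C(Y,ℂ)) p)) :=
      ((continuous_eval_const p).tendsto _).comp hcoe
    have h2 : ∀ n, ((g n : ↥A) : C(Y,ℂ)) p = 0 := by
      intro n
      rw [hgcoe]
      simp [hfp]
    have h3 : Filter.Tendsto (fun _ : ℕ => (0:ℂ)) Filter.atTop
        (nhds (((gl : ↥A) : C(Y,ℂ)) p)) := by
      simpa [h2] using h1
    exact (tendsto_nhds_unique h3 tendsto_const_nhds)
  exact ⟨f₁, hf₁A, ((gl : ↥A) : C(Y,ℂ)), gl.2, hf1p, hglp, hfeq⟩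
end

section
/- Let ψ ∈ Ŝ be a semicharacter whose modulus ρ = |ψ| is not an idempotent (ρ ∉ E(Ŝ)). Then the functional L on A(Ŝ) defined by L(F) = (d/dz) F(ρ^z ψ) evaluated at z = 1 is a well-defined point derivation of A(Ŝ) at ψ, and L ≠ 0: for any a ∈ S with 0 < ρ(a) < 1 one has L(â) = ψ(a)·log ρ(a) ≠ 0, where â(ξ) := ξ(a). -/
open Complex Topology Set

/-- The compact semigroup `Ŝ` of semicharacters of a discrete abelian monoid `S`:
nonzero homomorphisms into the multiplicative semigroup of the closed unit disc,
realized as the set of functions `ψ : S → ℂ` with `ψ 1 = 1`, multiplicative, and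
of modulus at most one, endowed with the topology of pointwise convergence. -/
def Shat (S : Type*) [CommMonoid S] : Set (S → ℂ) :=
  {ψ | ψ 1 = 1 ∧ (∀ s t, ψ (s * t) = ψ s * ψ t) ∧ ∀ s, ‖ψ s‖ ≤ 1}

/-- The group `X` of characters of `S`: semicharacters of modulus one. -/
def charGroup (S : Type*) [CommMonoid S] : Set (S → ℂ) :=
  {ψ | ψ ∈ Shat S ∧ ∀ s, ‖ψ s‖ = 1}

/-- `Ŝ₊`: the set of nonnegative semicharacters of `S`. -/
def ShatPos (S : Type*) [CommMonoid S] : Set (S → ℂ) :=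
  {ψ | ψ ∈ Shat S ∧ ∀ s, (ψ s).im = 0 ∧ 0 ≤ (ψ s).re}

/-- `E(Ŝ)`: the set of idempotent semicharacters (taking only the values `0` and `1`). -/
def idemSC (S : Type*) [CommMonoid S] : Set (S → ℂ) :=
  {ψ | ψ ∈ Shat S ∧ ∀ s, ψ s = 0 ∨ ψ s = 1}

/-- The modulus `|ψ|` of a semicharacter. -/
noncomputable def scMod {S : Type*} (ψ : S → ℂ) : S → ℂ :=
  fun s => (‖ψ s‖ : ℂ)

/-- The power `ρ^z` of a nonnegative semicharacter `ρ` (with `0^z := 0`). -/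
noncomputable def scPow {S : Type*} (ρ : S → ℂ) (z : ℂ) : S → ℂ :=
  fun s => if ρ s = 0 then 0 else ρ s ^ z

/-- A function `F` on `Ŝ` is generalized analytic on `Ŝ ∖ X` if for all
`ρ ∈ Ŝ₊ ∖ X` and `ψ ∈ Ŝ ∖ X` the map `z ↦ F (ρ^z ψ)` is analytic on the open
right half-plane and continuous at `0` along `(0, ∞)`. -/
def GenAnalytic (S : Type*) [CommMonoid S] (F : (S → ℂ) → ℂ) : Prop :=
  ∀ ρ ∈ ShatPos S \ charGroup S, ∀ ψ ∈ Shat S \ charGroup S,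
    DifferentiableOn ℂ (fun z : ℂ => F (scPow ρ z * ψ)) {z : ℂ | 0 < z.re} ∧
    ContinuousWithinAt (fun t : ℝ => F (scPow ρ (t : ℂ) * ψ)) (Set.Ioi (0 : ℝ)) 0

/-- Membership in the uniform algebra `A(Ŝ)`: continuous on `Ŝ` and generalized
analytic on `Ŝ ∖ X`. -/
def MemA (S : Type*) [CommMonoid S] (F : (S → ℂ) → ℂ) : Prop :=
  ContinuousOn F (Shat S) ∧ GenAnalytic S F

/-- Peak sets of the algebra `A(Ŝ)`. -/
def IsPeakSetA (S : Type*) [CommMonoid S] (P : Set (S → ℂ)) : Prop :=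
  P ⊆ Shat S ∧ IsClosed P ∧
    ∃ f, MemA S f ∧ (∀ ψ ∈ P, f ψ = 1) ∧ ∀ ψ ∈ Shat S \ P, ‖f ψ‖ < 1

/-- `p`-points of the algebra `A(Ŝ)`: points of `Ŝ` that are intersections of peak sets. -/
def IsPPointA (S : Type*) [CommMonoid S] (p : S → ℂ) : Prop :=
  p ∈ Shat S ∧
    ∃ Ps : Set (Set (S → ℂ)), (∀ P ∈ Ps, IsPeakSetA S P) ∧ ⋂₀ Ps = {p}

/-- The strong boundary `Γ` of `A(Ŝ)`: the set of all `p`-points. -/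
def strongBoundary (S : Type*) [CommMonoid S] : Set (S → ℂ) :=
  {ψ | IsPPointA S ψ}

/-- The coset `ρX` of the character group. -/
def cosetX (S : Type*) [CommMonoid S] (ρ : S → ℂ) : Set (S → ℂ) :=
  {φ | ∃ χ ∈ charGroup S, φ = ρ * χ}

/-- `E₀(Ŝ)`: idempotents `ρ₀` admitting `ρ₁ ∈ Ŝ₊` with `ρ₁ = 1` on `S(ρ₀)` and
`0 < ρ₁ < 1` off `S(ρ₀)`. -/
def E0 (S : Type*) [CommMonoid S] : Set (S → ℂ) :=
  {ρ₀ | ρ₀ ∈ idemSC S ∧ ∃ ρ₁ ∈ ShatPos S,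
    (∀ s, ρ₀ s ≠ 0 → ρ₁ s = 1) ∧ ∀ s, ρ₀ s = 0 → 0 < (ρ₁ s).re ∧ (ρ₁ s).re < 1}

/-- `θ`: the indicator function of `{e}`. -/
noncomputable def theta (S : Type*) [CommMonoid S] : S → ℂ :=
  ({1} : Set S).indicator 1

/-- A closed boundary of `A(Ŝ)`: a closed subset of `Ŝ` on which every function of
`A(Ŝ)` attains its maximum modulus over `Ŝ`. -/
def IsClosedBoundaryA (S : Type*) [CommMonoid S] (B : Set (S → ℂ)) : Prop :=
  B ⊆ Shat S ∧ IsClosed B ∧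
    ∀ f, MemA S f → ∃ ψ ∈ B, ∀ φ ∈ Shat S, ‖f φ‖ ≤ ‖f ψ‖

/-- The Shilov boundary of `A(Ŝ)`: the smallest closed boundary. -/
def shilovA (S : Type*) [CommMonoid S] : Set (S → ℂ) :=
  ⋂₀ {B | IsClosedBoundaryA S B}

/-- An ideal of the semigroup `S`: a nonempty proper subset stable under multiplication
by `S`. -/
def IsIdealS (S : Type*) [CommMonoid S] (I : Set S) : Prop :=
  I.Nonempty ∧ I ≠ Set.univ ∧ ∀ s : S, ∀ a ∈ I, s * a ∈ I

/-- A simple ideal: an ideal whose complement is a subsemigroup. -/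
def IsSimpleIdealS (S : Type*) [CommMonoid S] (I : Set S) : Prop :=
  IsIdealS S I ∧ ∀ a b : S, a ∉ I → b ∉ I → a * b ∉ I


private lemma scPow_add' {S : Type*} (ρ : S → ℂ) (z w : ℂ) :
    scPow ρ (z + w) = scPow ρ z * scPow ρ w := by
  funext s
  simp only [scPow, Pi.mul_apply]
  split_ifs with h
  · simp
  · exact Complex.cpow_add _ _ h

private lemma scPow_mul_apply' {S : Type*} [CommMonoid S] (ψ : S → ℂ)
    (hmul : ∀ s t, ψ (s * t) = ψ s * ψ t) (z : ℂ) (s t : S) :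
    scPow (scMod ψ) z (s * t) = scPow (scMod ψ) z s * scPow (scMod ψ) z t := by
  have h : scMod ψ (s * t) = scMod ψ s * scMod ψ t := by
    simp only [scMod, hmul, norm_mul, Complex.ofReal_mul]
  simp only [scPow]
  rcases eq_or_ne (scMod ψ s) 0 with hs | hs
  · simp [h, hs]
  rcases eq_or_ne (scMod ψ t) 0 with ht | ht
  · simp [h, ht]
  have hst : scMod ψ (s * t) ≠ 0 := by rw [h]; exact mul_ne_zero hs ht
  rw [if_neg hs, if_neg ht, if_neg hst, h]
  exact Complex.mul_cpow_ofReal_nonneg (norm_nonneg _) (norm_nonneg _) z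

/-- If `ψ ∈ Ŝ` has non-idempotent modulus `ρ = |ψ|` (with polar
decomposition `ψ = ρχ`, `χ ∈ X`), then `L F := (d/dz) F(ρ^z χ)|_{z=1}` is a
well-defined nonzero point derivation of `A(Ŝ)` at `ψ`, and `L(â) = ψ(a) log ρ(a) ≠ 0`
whenever `0 < ρ(a) < 1`. -/
theorem stmt3 {S : Type*} [CommMonoid S] [IsCancelMul S]
    (ψ χ : S → ℂ) (hψ : ψ ∈ Shat S) (hχ : χ ∈ charGroup S)
    (hpolar : ψ = scMod ψ * χ) (hρ : scMod ψ ∉ idemSC S) :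
    (∀ F, MemA S F → DifferentiableAt ℂ (fun z : ℂ => F (scPow (scMod ψ) z * χ)) 1) ∧
    (∀ F G, MemA S F → MemA S G →
      deriv (fun z : ℂ => (F + G) (scPow (scMod ψ) z * χ)) 1 =
        deriv (fun z : ℂ => F (scPow (scMod ψ) z * χ)) 1 +
          deriv (fun z : ℂ => G (scPow (scMod ψ) z * χ)) 1) ∧
    (∀ (c : ℂ) (F), MemA S F →
      deriv (fun z : ℂ => (c • F) (scPow (scMod ψ) z * χ)) 1 =
        c * deriv (fun z : ℂ => F (scPow (scMod ψ) z * χ)) 1) ∧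
    (∀ F G, MemA S F → MemA S G →
      deriv (fun z : ℂ => (F * G) (scPow (scMod ψ) z * χ)) 1 =
        F ψ * deriv (fun z : ℂ => G (scPow (scMod ψ) z * χ)) 1 +
          G ψ * deriv (fun z : ℂ => F (scPow (scMod ψ) z * χ)) 1) ∧
    (∀ a : S, 0 < ‖ψ a‖ → ‖ψ a‖ < 1 →
      deriv (fun z : ℂ => (scPow (scMod ψ) z * χ) a) 1 =
          ψ a * (Real.log (‖ψ a‖) : ℂ) ∧
        ψ a * (Real.log (‖ψ a‖) : ℂ) ≠ 0) ∧
    (∃ a : S, 0 < ‖ψ a‖ ∧ ‖ψ a‖ < 1) := by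
  have hρShat : scMod ψ ∈ Shat S := by
    refine ⟨?_, ?_, ?_⟩
    · show ((‖ψ 1‖ : ℝ) : ℂ) = 1
      rw [hψ.1]; simp
    · intro s t
      show ((‖ψ (s * t)‖ : ℝ) : ℂ) = _
      simp only [scMod, hψ.2.1, norm_mul, Complex.ofReal_mul]
    · intro s
      show ‖(‖ψ s‖ : ℂ)‖ ≤ 1
      rw [Complex.norm_real, Real.norm_eq_abs, _root_.abs_of_nonneg (norm_nonneg _)]
      exact hψ.2.2 s
  have hρPos : scMod ψ ∈ ShatPos S :=
    ⟨hρShat, fun s => ⟨Complex.ofReal_im _, by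
      show (0:ℝ) ≤ ((‖ψ s‖ : ℝ) : ℂ).re
      rw [Complex.ofReal_re]; exact norm_nonneg _⟩⟩
  have hwit : ∃ a, 0 < ‖ψ a‖ ∧ ‖ψ a‖ < 1 := by
    by_contra h
    push_neg at h
    apply hρ
    refine ⟨hρShat, fun s => ?_⟩
    rcases eq_or_ne (‖ψ s‖) 0 with h0 | h0
    · left; simp [scMod, h0]
    · right
      have hpos : 0 < ‖ψ s‖ := lt_of_le_of_ne (norm_nonneg _) (Ne.symm h0)
      have h1 : ‖ψ s‖ = 1 := le_antisymm (hψ.2.2 s) (h s hpos)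
      simp [scMod, h1]
  obtain ⟨a, ha0, ha1⟩ := hwit
  have hρnotX : scMod ψ ∉ charGroup S := by
    rintro ⟨-, h⟩
    have := h a
    rw [show scMod ψ a = ((‖ψ a‖ : ℝ) : ℂ) from rfl, Complex.norm_real, Real.norm_eq_abs,
      _root_.abs_of_nonneg (norm_nonneg _)] at this
    exact absurd this (ne_of_lt ha1)
  -- the auxiliary semicharacter ψ₀ = ρ^(1/2) * χ
  set ψ₀ : S → ℂ := scPow (scMod ψ) (1/2) * χ with hψ₀def
  have hχS := hχ.1
  have hψ₀Shat : ψ₀ ∈ Shat S := by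
    refine ⟨?_, ?_, ?_⟩
    · show scPow (scMod ψ) (1/2) 1 * χ 1 = 1
      rw [hχS.1, mul_one]
      show (if scMod ψ 1 = 0 then 0 else scMod ψ 1 ^ (1/2 : ℂ)) = 1
      rw [hρShat.1, if_neg one_ne_zero, Complex.one_cpow]
    · intro s t
      show scPow (scMod ψ) (1/2) (s * t) * χ (s * t) = _
      rw [scPow_mul_apply' ψ hψ.2.1, hχS.2.1]
      show _ = scPow (scMod ψ) (1/2) s * χ s * (scPow (scMod ψ) (1/2) t * χ t)
      ring
    · intro s
      show ‖scPow (scMod ψ) (1/2) s * χ s‖ ≤ 1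
      rw [norm_mul, hχ.2 s, mul_one]
      simp only [scPow]
      split_ifs with h
      · simp
      · have hpos : 0 < ‖ψ s‖ := by
          rcases eq_or_ne (‖ψ s‖) 0 with h0 | h0
          · exact absurd (by simp [scMod, h0]) h
          · exact lt_of_le_of_ne (norm_nonneg _) (Ne.symm h0)
        rw [show scMod ψ s = ((‖ψ s‖ : ℝ) : ℂ) from rfl,
          Complex.norm_cpow_eq_rpow_re_of_pos hpos]
        exact Real.rpow_le_one (norm_nonneg _) (hψ.2.2 s) (by norm_num)
  have hψ₀notX : ψ₀ ∉ charGroup S := by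
    rintro ⟨-, h⟩
    have := h a
    have hρa : scMod ψ a = ((‖ψ a‖ : ℝ) : ℂ) := rfl
    have hρane : scMod ψ a ≠ 0 := by
      rw [hρa]; exact_mod_cast ha0.ne'
    rw [show ψ₀ a = scPow (scMod ψ) (1/2) a * χ a from rfl, norm_mul, hχ.2 a, mul_one] at this
    simp only [scPow] at this
    rw [if_neg hρane, hρa, Complex.norm_cpow_eq_rpow_re_of_pos ha0] at this
    have hlt : ‖ψ a‖ ^ (1/2 : ℂ).re < 1 :=
      Real.rpow_lt_one (norm_nonneg _) ha1 (by norm_num)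
    exact absurd this (ne_of_lt hlt)
  have hdiffAt : ∀ F, MemA S F →
      DifferentiableAt ℂ (fun z : ℂ => F (scPow (scMod ψ) z * χ)) 1 := by
    intro F hF
    obtain ⟨hd, -⟩ := hF.2 (scMod ψ) ⟨hρPos, hρnotX⟩ ψ₀ ⟨hψ₀Shat, hψ₀notX⟩
    have heq : ∀ z : ℂ, scPow (scMod ψ) z * ψ₀ = scPow (scMod ψ) (z + 1/2) * χ := by
      intro z
      rw [hψ₀def, scPow_add', mul_assoc]
    have hopen : IsOpen {z : ℂ | 0 < z.re} := isOpen_lt continuous_const Complex.continuous_re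
    have hmem : (1/2 : ℂ) ∈ {z : ℂ | 0 < z.re} := by
      show (0:ℝ) < ((1/2 : ℂ)).re
      have h12 : ((1/2 : ℝ) : ℂ) = (1/2 : ℂ) := by norm_num
      rw [← h12, Complex.ofReal_re]; norm_num
    have h2 : DifferentiableAt ℂ (fun z : ℂ => F (scPow (scMod ψ) z * ψ₀)) ((1 : ℂ) - 1/2) := by
      rw [show (1 : ℂ) - 1/2 = 1/2 by norm_num]
      exact hd.differentiableAt (hopen.mem_nhds hmem)
    have h3 := h2.comp (1 : ℂ) (differentiableAt_id.sub_const (1/2 : ℂ))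
    have hfun : ((fun z : ℂ => F (scPow (scMod ψ) z * ψ₀)) ∘ fun y : ℂ => id y - 1/2) =
        fun z : ℂ => F (scPow (scMod ψ) z * χ) := by
      funext z
      show F (scPow (scMod ψ) (z - 1/2) * ψ₀) = F (scPow (scMod ψ) z * χ)
      rw [heq]
      have : z - 1/2 + 1/2 = z := by ring
      rw [this]
    rwa [hfun] at h3
  have hpoint : scPow (scMod ψ) 1 * χ = ψ := by
    funext s
    have hs := congrFun hpolar s
    simp only [Pi.mul_apply] at hs ⊢
    simp only [scPow]
    split_ifs with h
    · rw [h, zero_mul] at hs; rw [hs, zero_mul]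
    · rw [Complex.cpow_one]; exact hs.symm
  refine ⟨hdiffAt, ?_, ?_, ?_, ?_, ⟨a, ha0, ha1⟩⟩
  · intro F G hF hG
    show deriv (fun z : ℂ => F (scPow (scMod ψ) z * χ) + G (scPow (scMod ψ) z * χ)) 1 = _
    exact deriv_add (hdiffAt F hF) (hdiffAt G hG)
  · intro c F hF
    show deriv (fun z : ℂ => c * F (scPow (scMod ψ) z * χ)) 1 = _
    exact deriv_const_mul c (hdiffAt F hF)
  · intro F G hF hG
    show deriv (fun z : ℂ => F (scPow (scMod ψ) z * χ) * G (scPow (scMod ψ) z * χ)) 1 = _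
    rw [deriv_fun_mul (hdiffAt F hF) (hdiffAt G hG), hpoint]
    ring
  · intro b hb0 hb1
    have hbne : ψ b ≠ 0 := by
      intro h; rw [h] at hb0; simp at hb0
    have hlogne : Real.log (‖ψ b‖) ≠ 0 := ne_of_lt (Real.log_neg hb0 hb1)
    have hρb : scMod ψ b = ((‖ψ b‖ : ℝ) : ℂ) := rfl
    have hρbne : scMod ψ b ≠ 0 := by rw [hρb]; exact_mod_cast hb0.ne'
    constructor
    · have hfun : (fun z : ℂ => (scPow (scMod ψ) z * χ) b) =
          fun z : ℂ => (scMod ψ b) ^ z * χ b := by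
        funext z
        simp only [Pi.mul_apply, scPow, if_neg hρbne]
      rw [hfun]
      have hd : HasDerivAt (fun z : ℂ => (scMod ψ b) ^ z)
          ((scMod ψ b) ^ (1 : ℂ) * Complex.log (scMod ψ b)) 1 :=
        (hasStrictDerivAt_const_cpow (Or.inl hρbne)).hasDerivAt
      rw [(hd.mul_const (χ b)).deriv, Complex.cpow_one]
      have hlog : Complex.log (scMod ψ b) = ((Real.log (‖ψ b‖) : ℝ) : ℂ) := by
        rw [hρb, ← Complex.ofReal_log (norm_nonneg _)]
      have hψb := congrFun hpolar b
      simp only [Pi.mul_apply] at hψb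
      rw [hlog, hψb]; ring
    · exact mul_ne_zero hbne (by exact_mod_cast hlogne)
end

section
/- If a semicharacter ψ ∈ Ŝ belongs to the strong boundary Γ of the uniform algebra A(Ŝ), then |ψ| is an idempotent semicharacter, i.e. |ψ| ∈ E(Ŝ). -/
open Complex Topology Set

/-- If `ψ` belongs to the strong boundary of `A(Ŝ)` then `|ψ|` is an
idempotent semicharacter. -/
theorem stmt4 {S : Type*} [CommMonoid S] [IsCancelMul S]
    (ψ : S → ℂ) (hψ : ψ ∈ strongBoundary S) :
    scMod ψ ∈ idemSC S := by
  obtain ⟨⟨hψ1, hψm, hψb⟩, Ps, hPs, hInt⟩ := hψ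
  have hψS : ψ ∈ Shat S := ⟨hψ1, hψm, hψb⟩
  by_contra hni
  -- ρ := scMod ψ is a semicharacter
  have hρ1 : scMod ψ 1 = 1 := by simp [scMod, hψ1]
  have hρm : ∀ s t, scMod ψ (s * t) = scMod ψ s * scMod ψ t := by
    intro s t; simp [scMod, hψm s t, norm_mul]
  have hρb : ∀ s, ‖scMod ψ s‖ ≤ 1 := by
    intro s
    simpa [scMod, Complex.norm_real, Real.norm_eq_abs, _root_.abs_of_nonneg (norm_nonneg (ψ s))]
      using hψb s
  have hρS : scMod ψ ∈ Shat S := ⟨hρ1, hρm, hρb⟩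
  -- extract a point where 0 < |ψ s₀| < 1
  obtain ⟨s0, hs0⟩ : ∃ s, ¬(scMod ψ s = 0 ∨ scMod ψ s = 1) := by
    by_contra h
    push_neg at h
    exact hni ⟨hρS, fun s => h s⟩
  push_neg at hs0
  obtain ⟨h0, h1⟩ := hs0
  set r : ℝ := ‖ψ s0‖ with hr
  have hψs0 : ψ s0 ≠ 0 := by
    intro h; exact h0 (by simp [scMod, h])
  have hr0 : 0 < r := norm_pos_iff.mpr hψs0
  have hr1 : r < 1 := by
    rcases lt_or_eq_of_le (hψb s0) with h | h
    · exact h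
    · exact absurd (by simp [scMod, h]) h1
  -- the unimodular part of ψ
  set χ : S → ℂ := fun s => if ψ s = 0 then 0 else ψ s / (‖ψ s‖ : ℂ) with hχdef
  -- the analytic orbit through ψ
  set pt : ℂ → (S → ℂ) := fun z => scPow (scMod ψ) z * χ with hptdef
  have hρzero : ∀ s, scMod ψ s = 0 ↔ ψ s = 0 := by
    intro s
    simp [scMod, Complex.ofReal_eq_zero, norm_eq_zero]
  have hptval : ∀ (z : ℂ) (s : S), ψ s ≠ 0 →
      pt z s = (‖ψ s‖ : ℂ) ^ z * (ψ s / (‖ψ s‖ : ℂ)) := by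
    intro z s hs
    simp only [hptdef, hχdef, Pi.mul_apply, scPow, scMod, hρzero,
      Complex.ofReal_eq_zero, norm_eq_zero, if_neg hs]
  have hptzero : ∀ (z : ℂ) (s : S), ψ s = 0 → pt z s = 0 := by
    intro z s hs
    simp only [hptdef, hχdef, Pi.mul_apply, scPow, Complex.ofReal_eq_zero,
      if_pos ((hρzero s).mpr hs), if_pos hs, zero_mul]
  have hpt1 : pt 1 = ψ := by
    funext s
    by_cases hs : ψ s = 0
    · rw [hptzero 1 s hs, hs]
    · rw [hptval 1 s hs, Complex.cpow_one]
      have : (‖ψ s‖ : ℂ) ≠ 0 := by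
        simpa [Complex.ofReal_eq_zero, norm_eq_zero] using hs
      field_simp
  -- composition law for the orbit
  have hptadd : ∀ z w : ℂ, scPow (scMod ψ) z * pt w = pt (z + w) := by
    intro z w
    funext s
    by_cases hs : ψ s = 0
    · simp only [Pi.mul_apply, hptzero _ _ hs, mul_zero]
    · have hne : (‖ψ s‖ : ℂ) ≠ 0 := by
        simpa [Complex.ofReal_eq_zero, norm_eq_zero] using hs
      simp only [Pi.mul_apply, hptval _ _ hs, scPow, scMod, hρzero, if_neg hne]
      rw [Complex.cpow_add _ _ hne]
      simp only [hne, if_false]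
      ring
  -- each point of the orbit is a semicharacter, for Re z ≥ 0
  have hptShat : ∀ z : ℂ, 0 ≤ z.re → pt z ∈ Shat S := by
    intro z hz
    refine ⟨?_, ?_, ?_⟩
    · have hψ1ne : ψ 1 ≠ 0 := by rw [hψ1]; exact one_ne_zero
      rw [hptval z 1 hψ1ne, hψ1]
      simp
    · intro s t
      by_cases hs : ψ s = 0
      · have hst : ψ (s * t) = 0 := by rw [hψm, hs, zero_mul]
        rw [hptzero _ _ hst, hptzero _ _ hs, zero_mul]
      by_cases ht : ψ t = 0
      · have hst : ψ (s * t) = 0 := by rw [hψm, ht, mul_zero]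
        rw [hptzero _ _ hst, hptzero _ _ ht, mul_zero]
      have hst : ψ (s * t) ≠ 0 := by rw [hψm]; exact mul_ne_zero hs ht
      rw [hptval _ _ hst, hptval _ _ hs, hptval _ _ ht]
      have habs : (‖ψ (s * t)‖ : ℂ) =
          ((‖ψ s‖ * ‖ψ t‖ : ℝ) : ℂ) := by
        rw [hψm, norm_mul]
      have hsne : (‖ψ s‖ : ℂ) ≠ 0 := by
        simpa [Complex.ofReal_eq_zero, norm_eq_zero] using hs
      have htne : (‖ψ t‖ : ℂ) ≠ 0 := by
        simpa [Complex.ofReal_eq_zero, norm_eq_zero] using ht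
      rw [habs, Complex.ofReal_mul,
        Complex.mul_cpow_ofReal_nonneg (norm_nonneg _) (norm_nonneg _), hψm]
      field_simp
    · intro s
      by_cases hs : ψ s = 0
      · rw [hptzero _ _ hs]; simp
      · rw [hptval _ _ hs]
        have hpos : 0 < ‖ψ s‖ := norm_pos_iff.mpr hs
        rw [norm_mul, Complex.norm_cpow_eq_rpow_re_of_pos hpos, norm_div, Complex.norm_real, Real.norm_eq_abs,
          _root_.abs_of_nonneg (norm_nonneg _), div_self (ne_of_gt hpos), mul_one]
        exact Real.rpow_le_one (norm_nonneg _) (hψb s) hz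
  -- ρ and ψ'' := pt (1/2) are admissible for generalized analyticity
  have hρpos : scMod ψ ∈ ShatPos S := by
    refine ⟨hρS, fun s => ?_⟩
    simp [scMod, norm_nonneg]
  have hρX : scMod ψ ∉ charGroup S := by
    intro ⟨_, habs⟩
    have := habs s0
    rw [show scMod ψ s0 = ((r : ℝ) : ℂ) from rfl, Complex.norm_real, Real.norm_eq_abs,
      _root_.abs_of_nonneg hr0.le] at this
    exact absurd this (ne_of_lt hr1)
  have hpthalfShat : pt (1/2) ∈ Shat S := hptShat _ (by norm_num)
  have hpthalfabs : ‖pt (1/2) s0‖ = r ^ ((1:ℝ)/2) := by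
    rw [hptval _ _ hψs0, norm_mul, Complex.norm_cpow_eq_rpow_re_of_pos hr0, norm_div,
      Complex.norm_real, Real.norm_eq_abs, _root_.abs_of_nonneg hr0.le, div_self (ne_of_gt hr0), mul_one]
    norm_num
  have hpthalfX : pt (1/2) ∉ charGroup S := by
    intro ⟨_, habs⟩
    have h := habs s0
    rw [hpthalfabs] at h
    have : r ^ ((1:ℝ)/2) < 1 := Real.rpow_lt_one hr0.le hr1 (by norm_num)
    exact absurd h (ne_of_lt this)
  -- main step: pt 2 belongs to every peak set of the family
  have hkey : ∀ P ∈ Ps, pt 2 ∈ P := by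
    intro P hP
    obtain ⟨hsub, hcl, f, ⟨hfc, hfA⟩, hf1, hflt⟩ := hPs P hP
    have hψP : ψ ∈ P := by
      have : ψ ∈ ⋂₀ Ps := by rw [hInt]; exact rfl
      exact this P hP
    obtain ⟨hd, -⟩ := hfA (scMod ψ) ⟨hρpos, hρX⟩ (pt (1/2)) ⟨hpthalfShat, hpthalfX⟩
    set g : ℂ → ℂ := fun z => f (scPow (scMod ψ) z * pt (1/2)) with hgdef
    have hgval : ∀ z : ℂ, g z = f (pt (z + 1/2)) := by
      intro z; rw [hgdef]; simp only [hptadd]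
    have hfb : ∀ φ ∈ Shat S, ‖f φ‖ ≤ 1 := by
      intro φ hφ
      by_cases hφP : φ ∈ P
      · rw [hf1 φ hφP]; simp
      · exact le_of_lt (hflt φ ⟨hφ, hφP⟩)
    have hghalf : g (1/2) = 1 := by
      rw [hgval]
      norm_num [hpt1]
      exact hf1 ψ hψP
    set U : Set ℂ := {z : ℂ | 0 < z.re} with hUdef
    have hUo : IsOpen U := isOpen_lt continuous_const Complex.continuous_re
    have hUc : Convex ℝ U := convex_halfSpace_re_gt 0
    have hhalfU : (1/2 : ℂ) ∈ U := by
      show (0:ℝ) < (1/2 : ℂ).re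
      norm_num
    have hmax : IsMaxOn (norm ∘ g) U (1/2 : ℂ) := by
      intro z hz
      simp only [Function.comp_apply, hghalf, norm_one, Set.mem_setOf_eq]
      rw [hgval]
      refine hfb _ (hptShat _ ?_)
      have hz' : (0:ℝ) < z.re := hz
      have hre : (z + 1/2).re = z.re + (1/2 : ℂ).re := Complex.add_re _ _
      have h2 : (0:ℝ) < (1/2 : ℂ).re := by norm_num
      rw [hre]
      linarith
    have heq := Complex.eqOn_of_isPreconnected_of_isMaxOn_norm hUc.isPreconnected hUo hd
      hhalfU hmax
    have h32 : g (3/2) = 1 := by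
      have hm : (3/2 : ℂ) ∈ U := by
        show (0:ℝ) < ((3:ℂ)/2).re
        norm_num
      have h := heq hm
      simp only [Function.const_apply] at h
      rw [h]
      exact hghalf
    have hf2 : f (pt 2) = 1 := by
      rw [hgval] at h32
      norm_num at h32
      exact h32
    by_contra hn
    have := hflt (pt 2) ⟨hptShat 2 (by norm_num), hn⟩
    rw [hf2] at this
    simp at this
  -- hence pt 2 = ψ, which is impossible at s0
  have hpt2 : pt 2 = ψ := by
    have : pt 2 ∈ ⋂₀ Ps := fun P hP => hkey P hP
    rw [hInt] at this
    exact this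
  have hval2 := congrFun hpt2 s0
  rw [hptval 2 s0 hψs0] at hval2
  have hrne : ((r : ℝ) : ℂ) ≠ 0 := by
    simp [Complex.ofReal_eq_zero]; exact ne_of_gt hr0
  have hcpow2 : ((r : ℝ) : ℂ) ^ (2 : ℂ) = ((r : ℝ) : ℂ) ^ (2 : ℕ) := by
    rw [show ((2 : ℂ)) = ((2 : ℕ) : ℂ) by norm_num, Complex.cpow_natCast]
  rw [hcpow2] at hval2
  have : ((r : ℝ) : ℂ) ^ (2 : ℕ) * ψ s0 = ((r : ℝ) : ℂ) * ψ s0 := by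
    field_simp at hval2
    rw [← hr, div_eq_one_iff_eq hrne] at hval2
    rw [hval2]
  have hr2 : ((r : ℝ) : ℂ) ^ (2 : ℕ) = ((r : ℝ) : ℂ) :=
    mul_right_cancel₀ hψs0 this
  have : r ^ 2 = r := by exact_mod_cast hr2
  nlinarith
end

section
/- The strong boundary Γ of A(Ŝ) is a union of maximal subgroups of Ŝ: for every ψ ∈ Γ one has |ψ| ∈ E(Ŝ) and the whole coset |ψ|·X is contained in Γ. Consequently Γ = ⋃_{ρ ∈ F} ρX, where F = {|ψ| : ψ ∈ Γ} ⊆ E(Ŝ), and this union is disjoint. -/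
open Complex Topology Set

section CharExt
variable {S : Type*} [CommMonoid S] [IsCancelMul S]

/-- Partial character graphs used in the Zorn argument. -/
def IsPC (ψ : S → ℂ) (G : Set (S × ℂ)) : Prop :=
  (∀ p ∈ G, ‖p.2‖ = 1) ∧
  (∀ s z w, (s, z) ∈ G → (s, w) ∈ G → z = w) ∧
  (((1 : S), (1 : ℂ)) ∈ G) ∧
  (∀ s t z w, (s, z) ∈ G → (t, w) ∈ G → (s * t, z * w) ∈ G) ∧
  (∀ s : S, ψ s ≠ 0 → (s, ψ s / ‖ψ s‖) ∈ G)

lemma unit_div (z : ℂ) (hz : z ≠ 0) : ‖z / ‖z‖‖ = 1 := by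
  rw [norm_div, Complex.norm_real, norm_norm, div_self (norm_ne_zero_iff.mpr hz)]

lemma exists_char {ψ : S → ℂ} (hψ1 : ψ 1 = 1)
    (hψm : ∀ s t, ψ (s * t) = ψ s * ψ t) :
    ∃ χ : S → ℂ, (∀ s, ‖χ s‖ = 1) ∧ χ 1 = 1 ∧
      (∀ s t, χ (s * t) = χ s * χ t) ∧
      ∀ s, ψ s = (‖ψ s‖ : ℂ) * χ s := by
  classical
  set 𝒞 : Set (Set (S × ℂ)) := {G | IsPC ψ G} with h𝒞
  set G₀ : Set (S × ℂ) := {p | ∃ s, ψ s ≠ 0 ∧ p = (s, ψ s / ‖ψ s‖)} with hG₀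
  have habs : ∀ s : S, ψ s ≠ 0 → ‖ψ s / ‖ψ s‖‖ = 1 :=
    fun s hs => unit_div _ hs
  have hG₀𝒞 : G₀ ∈ 𝒞 := by
    refine ⟨?_, ?_, ?_, ?_, ?_⟩
    · rintro p ⟨s, hs, rfl⟩; exact habs s hs
    · rintro s z w ⟨s1, hs1, h1⟩ ⟨s2, hs2, h2⟩
      rw [Prod.mk.injEq] at h1 h2
      obtain ⟨rfl, rfl⟩ := h1; obtain ⟨rfl, rfl⟩ := h2; rfl
    · exact ⟨1, by simp [hψ1], by simp [hψ1]⟩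
    · rintro s t z w ⟨s1, hs1, h1⟩ ⟨s2, hs2, h2⟩
      rw [Prod.mk.injEq] at h1 h2
      obtain ⟨rfl, rfl⟩ := h1; obtain ⟨rfl, rfl⟩ := h2
      refine ⟨s * t, by simp [hψm, hs1, hs2], ?_⟩
      rw [Prod.mk.injEq]
      refine ⟨rfl, ?_⟩
      rw [hψm, norm_mul]
      push_cast
      rw [div_mul_div_comm]
    · intro s hs; exact ⟨s, hs, rfl⟩
  obtain ⟨G, -, hGmax⟩ := zorn_subset_nonempty 𝒞 (fun c hc hchain hne => by
    refine ⟨⋃₀ c, ⟨?_, ?_, ?_, ?_, ?_⟩, fun s hs => subset_sUnion_of_mem hs⟩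
    · rintro p ⟨g, hg, hp⟩; exact (hc hg).1 p hp
    · rintro s z w ⟨g1, hg1, h1⟩ ⟨g2, hg2, h2⟩
      rcases hchain.total hg1 hg2 with h | h
      · exact (hc hg2).2.1 s z w (h h1) h2
      · exact (hc hg1).2.1 s z w h1 (h h2)
    · obtain ⟨g, hg⟩ := hne; exact ⟨g, hg, (hc hg).2.2.1⟩
    · rintro s t z w ⟨g1, hg1, h1⟩ ⟨g2, hg2, h2⟩
      rcases hchain.total hg1 hg2 with h | h
      · exact ⟨g2, hg2, (hc hg2).2.2.2.1 s t z w (h h1) h2⟩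
      · exact ⟨g1, hg1, (hc hg1).2.2.2.1 s t z w h1 (h h2)⟩
    · obtain ⟨g, hg⟩ := hne; intro s hs; exact ⟨g, hg, (hc hg).2.2.2.2 s hs⟩) G₀ hG₀𝒞
  obtain ⟨hGabs, hGfun, hG1, hGmul, hGbase⟩ : IsPC ψ G := hGmax.prop
  set M : Set S := {s | ∃ z, (s, z) ∈ G} with hM
  have hchoice : ∀ s : S, ∃ z : ℂ, s ∈ M → (s, z) ∈ G := by
    intro s
    by_cases h : s ∈ M
    · exact ⟨h.choose, fun _ => h.choose_spec⟩
    · exact ⟨1, fun hs => absurd hs h⟩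
  choose u huG' using hchoice
  have huG : ∀ s ∈ M, (s, u s) ∈ G := fun s hs => huG' s hs
  have hu_eq : ∀ s z, (s, z) ∈ G → u s = z := by
    intro s z hsz; exact hGfun s (u s) z (huG s ⟨z, hsz⟩) hsz
  have h1M : (1 : S) ∈ M := ⟨1, hG1⟩
  have hu1 : u 1 = 1 := hu_eq 1 1 hG1
  have hmulM : ∀ a ∈ M, ∀ b ∈ M, a * b ∈ M := by
    rintro a ⟨z, hz⟩ b ⟨w, hw⟩; exact ⟨z * w, hGmul a b z w hz hw⟩
  have hu_mul : ∀ a ∈ M, ∀ b ∈ M, u (a * b) = u a * u b := by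
    intro a ha b hb
    exact hu_eq _ _ (hGmul a b (u a) (u b) (huG a ha) (huG b hb))
  have hu_abs : ∀ s ∈ M, ‖u s‖ = 1 := fun s hs => hGabs _ (huG s hs)
  have hu_ne : ∀ s ∈ M, u s ≠ 0 := by
    intro s hs h0
    have := hu_abs s hs; rw [h0] at this; simp at this
  have hMuniv : ∀ s : S, s ∈ M := by
    by_contra hne
    push_neg at hne
    obtain ⟨s₀, hs₀⟩ := hne
    set K : Set ℕ := {k | 0 < k ∧ ∃ a ∈ M, ∃ b ∈ M, s₀ ^ k * a = b} with hKdef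
    have Ksub : ∀ k ∈ K, ∀ l ∈ K, l < k → k - l ∈ K := by
      rintro k ⟨hk, a, ha, b, hb, hab⟩ l ⟨hl, c, hc, d, hd, hcd⟩ hlt
      refine ⟨by omega, d * a, hmulM d hd a ha, b * c, hmulM b hb c hc, ?_⟩
      have h1 : s₀ ^ (k - l) * (d * a) = s₀ ^ (k - l) * (s₀ ^ l * c * a) := by rw [hcd]
      have h2 : s₀ ^ (k - l) * (s₀ ^ l * c * a) = s₀ ^ k * a * c := by
        rw [← mul_assoc, ← mul_assoc, ← pow_add, Nat.sub_add_cancel hlt.le]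
        ac_rfl
      rw [h1, h2, hab]
    obtain ⟨w, hw_abs, hw_key⟩ : ∃ w : ℂ, ‖w‖ = 1 ∧
        ∀ k a b, 0 < k → a ∈ M → b ∈ M → s₀ ^ k * a = b → u b = w ^ k * u a := by
      by_cases hKne : ∃ k, k ∈ K
      · set d := Nat.find hKne with hd
        obtain ⟨hd_pos, a₀, ha₀, b₀, hb₀, hab₀⟩ : d ∈ K := Nat.find_spec hKne
        set v : ℂ := u b₀ / u a₀ with hv
        have ha₀ne := hu_ne a₀ ha₀
        have hv_ne : v ≠ 0 := div_ne_zero (hu_ne b₀ hb₀) ha₀ne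
        have hv_abs : ‖v‖ = 1 := by
          rw [hv, norm_div, hu_abs b₀ hb₀, hu_abs a₀ ha₀, div_one]
        have hdvd : ∀ k ∈ K, d ∣ k := by
          intro k hk
          induction k using Nat.strong_induction_on with
          | _ k ih =>
            have hdk : d ≤ k := Nat.find_min' hKne hk
            rcases eq_or_lt_of_le hdk with heq | hlt
            · exact heq ▸ dvd_refl d
            · have hk' : k - d ∈ K := Ksub k hk d (Nat.find_spec hKne) hlt
              obtain ⟨m, hm⟩ := ih (k - d) (by omega) hk'
              exact ⟨m + 1, by rw [Nat.mul_succ]; omega⟩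
        have hvm : ∀ m a b, a ∈ M → b ∈ M → s₀ ^ (d * m) * a = b → u b = v ^ m * u a := by
          intro m
          induction m with
          | zero =>
            intro a b ha hb h
            rw [Nat.mul_zero, pow_zero, one_mul] at h
            rw [← h, pow_zero, one_mul]
          | succ m ih =>
            intro a b ha hb h
            have step : s₀ ^ (d * m) * (b₀ * a) = b * a₀ := by
              have e1 : s₀ ^ (d * m) * (b₀ * a) = s₀ ^ (d * m) * (s₀ ^ d * a₀ * a) := by
                rw [hab₀]
              have e2 : s₀ ^ (d * m) * (s₀ ^ d * a₀ * a) = s₀ ^ (d * (m + 1)) * a * a₀ := by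
                rw [← mul_assoc, ← mul_assoc, ← pow_add]
                rw [show d * m + d = d * (m + 1) by ring]
                ac_rfl
              rw [e1, e2, h]
            have hrec := ih (b₀ * a) (b * a₀) (hmulM b₀ hb₀ a ha) (hmulM b hb a₀ ha₀) step
            rw [hu_mul b hb a₀ ha₀, hu_mul b₀ hb₀ a ha] at hrec
            have key : v ^ (m + 1) * u a * u a₀ = v ^ m * (u b₀ * u a) := by
              rw [pow_succ, hv]
              field_simp
            exact mul_right_cancel₀ ha₀ne (by rw [hrec, ← key])
        refine ⟨Complex.exp (Complex.log v / (d : ℂ)), ?_, ?_⟩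
        · rw [Complex.norm_exp]
          rw [show ((d : ℕ) : ℂ) = ((d : ℝ) : ℂ) by push_cast; rfl, Complex.div_ofReal_re]
          rw [Complex.log_re, hv_abs, Real.log_one, zero_div, Real.exp_zero]
        · have hdC : (d : ℂ) ≠ 0 := Nat.cast_ne_zero.mpr (by omega)
          have hwd : Complex.exp (Complex.log v / (d : ℂ)) ^ d = v := by
            rw [← Complex.exp_nat_mul]
            rw [show (d : ℂ) * (Complex.log v / (d : ℂ)) = Complex.log v by field_simp]
            exact Complex.exp_log hv_ne
          intro k a b hk ha hb h
          obtain ⟨m, rfl⟩ := hdvd k ⟨hk, a, ha, b, hb, h⟩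
          rw [pow_mul, hwd]
          exact hvm m a b ha hb h
      · refine ⟨1, by simp, fun k a b hk ha hb h => absurd (hKne ⟨k, hk, a, ha, b, hb, h⟩) ?_⟩
        simp
    set G' : Set (S × ℂ) := {p | ∃ n : ℕ, ∃ a ∈ M, p = (s₀ ^ n * a, w ^ n * u a)} with hG'def
    have hGG' : G ⊆ G' := by
      rintro ⟨s, z⟩ hsz
      refine ⟨0, s, ⟨z, hsz⟩, ?_⟩
      rw [pow_zero, one_mul, pow_zero, one_mul, hu_eq s z hsz]
    have hfun' : ∀ n m a b, a ∈ M → b ∈ M → s₀ ^ n * a = s₀ ^ m * b →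
        w ^ n * u a = w ^ m * u b := by
      have aux : ∀ n m a b, a ∈ M → b ∈ M → m ≤ n → s₀ ^ n * a = s₀ ^ m * b →
          w ^ n * u a = w ^ m * u b := by
        intro n m a b ha hb hmn h
        have hcan : s₀ ^ m * (s₀ ^ (n - m) * a) = s₀ ^ m * b := by
          rw [← mul_assoc, ← pow_add, show m + (n - m) = n by omega]
          exact h
        have hrel : s₀ ^ (n - m) * a = b := mul_left_cancel hcan
        rcases Nat.eq_or_lt_of_le hmn with heq | hlt
        · rw [← heq] at hrel ⊢
          rw [Nat.sub_self, pow_zero, one_mul] at hrel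
          rw [hrel]
        · have := hw_key (n - m) a b (by omega) ha hb hrel
          rw [this, ← mul_assoc, ← pow_add, show m + (n - m) = n by omega]
      intro n m a b ha hb h
      rcases le_total m n with hmn | hnm
      · exact aux n m a b ha hb hmn h
      · exact (aux m n b a hb ha hnm h.symm).symm
    have hG'𝒞 : G' ∈ 𝒞 := by
      refine ⟨?_, ?_, ?_, ?_, ?_⟩
      · rintro p ⟨n, a, ha, rfl⟩
        simp only [norm_mul, norm_pow, hw_abs, hu_abs a ha, one_pow, mul_one]
      · rintro s z zz ⟨n, a, ha, h1⟩ ⟨m, b, hb, h2⟩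
        rw [Prod.mk.injEq] at h1 h2
        obtain ⟨hs1, rfl⟩ := h1; obtain ⟨hs2, rfl⟩ := h2
        exact hfun' n m a b ha hb (by rw [← hs1, ← hs2])
      · exact ⟨0, 1, h1M, by simp [hu1]⟩
      · rintro s t z zz ⟨n, a, ha, h1⟩ ⟨m, b, hb, h2⟩
        rw [Prod.mk.injEq] at h1 h2
        obtain ⟨rfl, rfl⟩ := h1; obtain ⟨rfl, rfl⟩ := h2
        refine ⟨n + m, a * b, hmulM a ha b hb, ?_⟩
        rw [Prod.mk.injEq]
        constructor
        · rw [pow_add]; ac_rfl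
        · rw [hu_mul a ha b hb, pow_add]; ring
      · intro s hs; exact hGG' (hGbase s hs)
    have hsub : G' ⊆ G := hGmax.2 hG'𝒞 hGG'
    apply hs₀
    have hmem : (s₀ ^ 1 * 1, w ^ 1 * u 1) ∈ G' := ⟨1, 1, h1M, rfl⟩
    have : (s₀, w) ∈ G := by
      have := hsub hmem
      rwa [pow_one, mul_one, pow_one, hu1, mul_one] at this
    exact ⟨w, this⟩
  refine ⟨u, fun s => hu_abs s (hMuniv s), hu1,
    fun s t => hu_mul s (hMuniv s) t (hMuniv t), fun s => ?_⟩
  by_cases hs : ψ s = 0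
  · rw [hs]; simp
  · rw [hu_eq s _ (hGbase s hs), mul_comm,
      div_mul_cancel₀ _ (by simpa using norm_ne_zero_iff.mpr hs)]

end CharExt

section Aux
variable {S : Type*} [CommMonoid S]

lemma abs_ne_zero' {z : ℂ} (h : z ≠ 0) : (‖z‖ : ℂ) ≠ 0 := by
  simpa using norm_ne_zero_iff.mpr h

lemma Shat_mul_char {ψ η : S → ℂ} (hψ : ψ ∈ Shat S) (hη : η ∈ charGroup S) :
    ψ * η ∈ Shat S := by
  obtain ⟨h1, hm, hb⟩ := hψ
  obtain ⟨⟨h1', hm', hb'⟩, habs⟩ := hη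
  refine ⟨by simp [Pi.mul_apply, h1, h1'], fun s t => by
    simp only [Pi.mul_apply, hm, hm']; ring, fun s => ?_⟩
  simp only [Pi.mul_apply, norm_mul, habs s, mul_one]
  exact hb s

lemma charGroup_mul {η₁ η₂ : S → ℂ} (h1 : η₁ ∈ charGroup S) (h2 : η₂ ∈ charGroup S) :
    η₁ * η₂ ∈ charGroup S := by
  refine ⟨Shat_mul_char h1.1 h2, fun s => ?_⟩
  simp only [Pi.mul_apply, norm_mul, h1.2 s, h2.2 s, mul_one]

lemma charGroup_conj {η : S → ℂ} (hη : η ∈ charGroup S) :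
    (fun s => starRingEnd ℂ (η s)) ∈ charGroup S := by
  obtain ⟨⟨h1, hm, hb⟩, habs⟩ := hη
  refine ⟨⟨by simp [h1], fun s t => by simp [hm], fun s => ?_⟩, fun s => ?_⟩ <;>
    simp [Complex.norm_conj, habs s]

lemma char_mul_conj {η : S → ℂ} (hη : η ∈ charGroup S) (φ : S → ℂ) :
    (φ * η) * (fun s => starRingEnd ℂ (η s)) = φ := by
  funext s
  have : η s * starRingEnd ℂ (η s) = 1 := by
    rw [Complex.mul_conj, ← Complex.sq_norm, hη.2 s]
    norm_num
  simp only [Pi.mul_apply]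
  rw [mul_assoc, this, mul_one]

lemma char_conj_mul {η : S → ℂ} (hη : η ∈ charGroup S) (φ : S → ℂ) :
    (φ * (fun s => starRingEnd ℂ (η s))) * η = φ := by
  funext s
  have : η s * starRingEnd ℂ (η s) = 1 := by
    rw [Complex.mul_conj, ← Complex.sq_norm, hη.2 s]
    norm_num
  simp only [Pi.mul_apply]
  rw [mul_assoc, mul_comm (starRingEnd ℂ (η s)), this, mul_one]

lemma not_charGroup_mul_char {ψ η : S → ℂ} (hψ : ψ ∈ Shat S) (hψn : ψ ∉ charGroup S)
    (hη : η ∈ charGroup S) : ψ * η ∉ charGroup S := by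
  intro hmem
  apply hψn
  refine ⟨hψ, fun s => ?_⟩
  have := hmem.2 s
  simp only [Pi.mul_apply, norm_mul, hη.2 s, mul_one] at this
  exact this

lemma memA_mul_char {f : (S → ℂ) → ℂ} (hf : MemA S f) {η : S → ℂ}
    (hη : η ∈ charGroup S) : MemA S (fun φ => f (φ * η)) := by
  have hcont : Continuous (fun φ : S → ℂ => φ * η) := by
    apply continuous_pi
    intro s
    exact (continuous_apply s).mul continuous_const
  constructor
  · exact hf.1.comp hcont.continuousOn (fun φ hφ => Shat_mul_char hφ hη)
  · intro ρ hρ ψ hψ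
    have hψη : ψ * η ∈ Shat S \ charGroup S :=
      ⟨Shat_mul_char hψ.1 hη, not_charGroup_mul_char hψ.1 hψ.2 hη⟩
    have key : ∀ z : ℂ, (scPow ρ z * ψ) * η = scPow ρ z * (ψ * η) := fun z =>
      funext fun s => by simp only [Pi.mul_apply, mul_assoc]
    have h := hf.2 ρ hρ (ψ * η) hψη
    constructor
    · have heq : (fun z : ℂ => f ((scPow ρ z * ψ) * η)) =
          (fun z : ℂ => f (scPow ρ z * (ψ * η))) := funext fun z => by rw [key]
      exact heq ▸ h.1
    · have heq : (fun t : ℝ => f ((scPow ρ (t : ℂ) * ψ) * η)) =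
          (fun t : ℝ => f (scPow ρ (t : ℂ) * (ψ * η))) := funext fun t => by rw [key]
      exact heq ▸ h.2

lemma pPoint_mul_char {ψ η : S → ℂ} (hψ : IsPPointA S ψ) (hη : η ∈ charGroup S) :
    IsPPointA S (ψ * η) := by
  obtain ⟨hψS, Ps, hPs, hInt⟩ := hψ
  set ηc : S → ℂ := fun s => starRingEnd ℂ (η s) with hηcdef
  have hηc : ηc ∈ charGroup S := charGroup_conj hη
  have hcancel : ∀ φ : S → ℂ, (φ * η) * ηc = φ := char_mul_conj hη
  have hcancel2 : ∀ φ : S → ℂ, (φ * ηc) * η = φ := char_conj_mul hη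
  have hcontc : Continuous (fun φ : S → ℂ => φ * ηc) := by
    apply continuous_pi
    intro s
    exact (continuous_apply s).mul continuous_const
  have himg : ∀ P : Set (S → ℂ), (· * η) '' P = (· * ηc) ⁻¹' P := by
    intro P
    ext φ
    constructor
    · rintro ⟨p, hp, rfl⟩
      show (p * η) * ηc ∈ P
      rw [hcancel]
      exact hp
    · intro hφ
      exact ⟨φ * ηc, hφ, hcancel2 φ⟩
  have hψmem : ∀ P ∈ Ps, ψ ∈ P := by
    intro P hP
    have : ψ ∈ ⋂₀ Ps := by rw [hInt]; exact Set.mem_singleton ψ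
    exact this P hP
  refine ⟨Shat_mul_char hψS hη, (fun P => (· * η) '' P) '' Ps, ?_, ?_⟩
  · rintro Q ⟨P, hP, rfl⟩
    obtain ⟨hPsub, hPcl, f, hfA, hf1, hflt⟩ := hPs P hP
    show IsPeakSetA S ((· * η) '' P)
    refine ⟨?_, ?_, fun φ => f (φ * ηc), memA_mul_char hfA hηc, ?_, ?_⟩
    · rintro φ ⟨p, hp, rfl⟩
      exact Shat_mul_char (hPsub hp) hη
    · rw [himg P]
      exact hPcl.preimage hcontc
    · rintro φ ⟨p, hp, rfl⟩
      show f ((p * η) * ηc) = 1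
      rw [hcancel]
      exact hf1 p hp
    · rintro φ ⟨hφS, hφn⟩
      apply hflt
      refine ⟨Shat_mul_char hφS hηc, fun hmem => hφn ?_⟩
      exact ⟨φ * ηc, hmem, hcancel2 φ⟩
  · ext x
    constructor
    · intro hx
      have hxc : x * ηc ∈ ⋂₀ Ps := by
        intro P hP
        have hmem : x ∈ (· * η) '' P := hx _ ⟨P, hP, rfl⟩
        rw [himg P] at hmem
        exact hmem
      rw [hInt, Set.mem_singleton_iff] at hxc
      have hxe : x = ψ * η := by rw [← hxc]; exact (hcancel2 x).symm
      exact Set.mem_singleton_iff.mpr hxe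
    · intro hx
      rw [Set.mem_singleton_iff] at hx
      subst hx
      rintro Q ⟨P, hP, rfl⟩
      show ψ * η ∈ (· * η) '' P
      exact ⟨ψ, hψmem P hP, rfl⟩

end Aux


section Idem
variable {S : Type*} [CommMonoid S] [IsCancelMul S]

lemma scMod_idem {ψ : S → ℂ} (hψ : IsPPointA S ψ) : scMod ψ ∈ idemSC S := by
  obtain ⟨hψ1, hψm, hψb⟩ := hψ.1
  have rnn : ∀ s, 0 ≤ ‖ψ s‖ := fun s => norm_nonneg _
  have hShat : scMod ψ ∈ Shat S := by
    refine ⟨by simp [scMod, hψ1], fun s t => ?_, fun s => ?_⟩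
    · simp only [scMod, hψm, norm_mul]; push_cast; ring
    · simp only [scMod, Complex.norm_real, norm_norm]
      exact hψb s
  refine ⟨hShat, fun s => ?_⟩
  by_contra hcon
  push_neg at hcon
  obtain ⟨hne0, hne1⟩ := hcon
  set s₀ := s with hs₀def
  set r₀ : ℝ := ‖ψ s₀‖ with hr₀
  have hr₀pos : 0 < r₀ := by
    rcases lt_or_eq_of_le (rnn s₀) with h | h
    · exact h
    · exfalso; apply hne0; simp [scMod, ← h]
  have hr₀lt : r₀ < 1 := by
    rcases lt_or_eq_of_le (hψb s₀) with h | h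
    · exact h
    · exfalso; apply hne1
      show (‖ψ s₀‖ : ℂ) = 1
      rw [h]; norm_num
  -- the character χ with ψ = |ψ| ⬝ χ
  obtain ⟨χ, hχabs, hχ1, hχm, hχeq⟩ := exists_char hψ1 hψm
  have hχne : ∀ t, χ t ≠ 0 := by
    intro t h0
    have := hχabs t; rw [h0] at this; simp at this
  -- σ = sqrt of the modulus, ψ' = σ ⬝ χ
  set r : S → ℝ := fun t => ‖ψ t‖ with hrdef
  set σ : S → ℂ := fun t => (Real.sqrt (r t) : ℂ) with hσdef
  set ψ' : S → ℂ := σ * χ with hψ'def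
  have hr1 : r 1 = 1 := by simp [hrdef, hψ1]
  have hrmul : ∀ a b, r (a * b) = r a * r b := by
    intro a b; simp [hrdef, hψm, norm_mul]
  have hσzero : ∀ t, σ t = 0 ↔ r t = 0 := by
    intro t
    simp only [hσdef, Complex.ofReal_eq_zero]
    constructor
    · intro h; have := Real.sqrt_eq_zero'.mp h; have := rnn t; rw [hrdef]; linarith [this]
    · intro h; rw [h, Real.sqrt_zero]
  have hσ1 : σ 1 = 1 := by simp [hσdef, hr1]
  have hσmul : ∀ a b, σ (a * b) = σ a * σ b := by
    intro a b
    show ((Real.sqrt (r (a * b)) : ℝ) : ℂ) = ((Real.sqrt (r a) : ℝ) : ℂ) * ((Real.sqrt (r b) : ℝ) : ℂ)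
    rw [hrmul, Real.sqrt_mul (show (0:ℝ) ≤ r a from rnn a)]
    push_cast
    rfl
  have hσabs : ∀ t, ‖σ t‖ = Real.sqrt (r t) := by
    intro t
    simp [hσdef, Complex.norm_real, _root_.abs_of_nonneg (Real.sqrt_nonneg _)]
  have hsqrt_le : ∀ t, Real.sqrt (r t) ≤ 1 := fun t => Real.sqrt_le_one.mpr (hψb t)
  have hsq0 : Real.sqrt r₀ < 1 := by
    nlinarith [Real.sq_sqrt (le_of_lt hr₀pos), Real.sqrt_nonneg r₀]
  have hsq0pos : 0 < Real.sqrt r₀ := Real.sqrt_pos.mpr hr₀pos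
  have hσShat : σ ∈ Shat S := ⟨hσ1, hσmul, fun t => by rw [hσabs]; exact hsqrt_le t⟩
  have hσmem : σ ∈ ShatPos S \ charGroup S := by
    refine ⟨⟨hσShat, fun t => by refine ⟨?_, ?_⟩ <;> simp [hσdef, Real.sqrt_nonneg]⟩, ?_⟩
    intro hc
    have := hc.2 s₀
    rw [hσabs] at this
    rw [this] at hsq0
    exact lt_irrefl 1 hsq0
  have hψ'Shat : ψ' ∈ Shat S := by
    refine ⟨by simp [hψ'def, Pi.mul_apply, hσ1, hχ1], fun a b => by
      simp only [hψ'def, Pi.mul_apply, hσmul, hχm]; ring, fun t => ?_⟩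
    simp only [hψ'def, Pi.mul_apply, norm_mul, hσabs, hχabs, mul_one]
    exact hsqrt_le t
  have hψ'mem : ψ' ∈ Shat S \ charGroup S := by
    refine ⟨hψ'Shat, fun hc => ?_⟩
    have := hc.2 s₀
    simp only [hψ'def, Pi.mul_apply, norm_mul, hσabs, hχabs, mul_one] at this
    rw [this] at hsq0
    exact lt_irrefl 1 hsq0
  -- membership of the analytic disc in Ŝ
  have hmemShat : ∀ z : ℂ, 0 ≤ z.re → scPow σ z * ψ' ∈ Shat S := by
    intro z hz
    refine ⟨?_, ?_, ?_⟩
    · have h1 : σ (1 : S) ≠ 0 := by rw [hσ1]; exact one_ne_zero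
      show (if σ (1 : S) = 0 then 0 else σ 1 ^ z) * ψ' 1 = 1
      rw [if_neg h1, hσ1, Complex.one_cpow]
      show 1 * (σ 1 * χ 1) = 1
      rw [hσ1, hχ1, one_mul, mul_one]
    · intro a b
      simp only [Pi.mul_apply, scPow]
      by_cases ha : σ a = 0
      · have hab : σ (a * b) = 0 := by rw [hσmul, ha, zero_mul]
        rw [if_pos ha, if_pos hab]
        ring
      · by_cases hb : σ b = 0
        · have hab : σ (a * b) = 0 := by rw [hσmul, hb, mul_zero]
          rw [if_pos hb, if_pos hab]
          ring
        · have hab : σ (a * b) ≠ 0 := by rw [hσmul]; exact mul_ne_zero ha hb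
          rw [if_neg ha, if_neg hb, if_neg hab]
          have hcpow : σ (a * b) ^ z = σ a ^ z * σ b ^ z := by
            rw [hσmul]
            exact Complex.mul_cpow_ofReal_nonneg (Real.sqrt_nonneg _) (Real.sqrt_nonneg _) z
          rw [hcpow, hψ'def]
          simp only [Pi.mul_apply, hσmul, hχm]
          ring
    · intro t
      simp only [Pi.mul_apply, scPow]
      by_cases ht : σ t = 0
      · rw [if_pos ht]
        simp
      · rw [if_neg ht]
        have hpos : 0 < Real.sqrt (r t) := by
          rcases lt_or_eq_of_le (Real.sqrt_nonneg (r t)) with h | h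
          · exact h
          · exfalso; apply ht; simp [hσdef, ← h]
        have habs : ‖σ t ^ z‖ = Real.sqrt (r t) ^ z.re := by
          rw [hσdef]
          exact Complex.norm_cpow_eq_rpow_re_of_pos hpos z
        rw [norm_mul, habs]
        have h1 : Real.sqrt (r t) ^ z.re ≤ 1 :=
          Real.rpow_le_one (Real.sqrt_nonneg _) (hsqrt_le t) hz
        have h2 : ‖ψ' t‖ ≤ 1 := hψ'Shat.2.2 t
        calc Real.sqrt (r t) ^ z.re * ‖ψ' t‖ ≤ 1 * 1 := by
              apply mul_le_mul h1 h2 (norm_nonneg _) zero_le_one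
        _ = 1 := by norm_num
  -- the disc passes through ψ at z = 1
  have hg1 : scPow σ 1 * ψ' = ψ := by
    funext t
    simp only [Pi.mul_apply, scPow]
    by_cases ht : σ t = 0
    · rw [if_pos ht]
      have : ψ t = 0 := by
        have := (hσzero t).mp ht
        rw [hrdef] at this
        exact norm_eq_zero.mp this
      rw [this, zero_mul]
    · rw [if_neg ht, Complex.cpow_one, hψ'def]
      simp only [Pi.mul_apply, ← mul_assoc]
      have : σ t * σ t = (r t : ℂ) := by
        rw [hσdef]
        push_cast [← Complex.ofReal_mul]
        rw [Real.mul_self_sqrt (rnn t)]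
      rw [this]
      exact (hχeq t).symm
  -- main argument
  obtain ⟨hψS, Ps, hPs, hInt⟩ := hψ
  have hψInt : ψ ∈ ⋂₀ Ps := by rw [hInt]; exact Set.mem_singleton ψ
  have hkey : scPow σ 3 * ψ' ∈ ⋂₀ Ps := by
    intro P hP
    obtain ⟨hPsub, hPcl, f, hfA, hf1, hflt⟩ := hPs P hP
    have hψP : ψ ∈ P := hψInt P hP
    have hdiff : DifferentiableOn ℂ (fun z : ℂ => f (scPow σ z * ψ')) {z : ℂ | 0 < z.re} :=
      (hfA.2 σ hσmem ψ' hψ'mem).1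
    have hopen : IsOpen {z : ℂ | 0 < z.re} := isOpen_lt continuous_const Complex.continuous_re
    have hpre : IsPreconnected {z : ℂ | 0 < z.re} := (convex_halfSpace_re_gt 0).isPreconnected
    have h1U : (1 : ℂ) ∈ {z : ℂ | 0 < z.re} := by simp
    have h3U : (3 : ℂ) ∈ {z : ℂ | 0 < z.re} := by
      simp only [Set.mem_setOf_eq]
      norm_num
    have hgval1 : f (scPow σ 1 * ψ') = 1 := by rw [hg1]; exact hf1 ψ hψP
    have hmax : IsMaxOn (norm ∘ fun z : ℂ => f (scPow σ z * ψ')) {z : ℂ | 0 < z.re} 1 := by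
      intro z hz
      have hzS : scPow σ z * ψ' ∈ Shat S := hmemShat z (le_of_lt hz)
      have hb : ‖f (scPow σ z * ψ')‖ ≤ 1 := by
        by_cases hmem : scPow σ z * ψ' ∈ P
        · rw [hf1 _ hmem]; norm_num
        · exact le_of_lt (hflt _ ⟨hzS, hmem⟩)
      show ‖f (scPow σ z * ψ')‖ ≤ ‖f (scPow σ 1 * ψ')‖
      rw [hgval1, norm_one]
      exact hb
    have heqon := Complex.eqOn_of_isPreconnected_of_isMaxOn_norm hpre hopen hdiff h1U hmax
    have hg3 : f (scPow σ 3 * ψ') = 1 := by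
      have h3 : f (scPow σ 3 * ψ') = f (scPow σ 1 * ψ') := heqon h3U
      rw [h3]
      exact hgval1
    by_contra hnot
    have := hflt _ ⟨hmemShat 3 (by norm_num), hnot⟩
    rw [hg3] at this
    simp at this
  rw [hInt, Set.mem_singleton_iff] at hkey
  -- evaluate at s₀ and derive a contradiction
  have heval := congrFun hkey s₀
  have hσs₀ : σ s₀ ≠ 0 := by
    show ((Real.sqrt (r s₀) : ℝ) : ℂ) ≠ 0
    exact Complex.ofReal_ne_zero.mpr (ne_of_gt hsq0pos)
  simp only [Pi.mul_apply, scPow, if_neg hσs₀] at heval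
  have hcpow3 : σ s₀ ^ (3 : ℂ) = σ s₀ ^ (3 : ℕ) := by
    rw [show (3 : ℂ) = ((3 : ℕ) : ℂ) by norm_num]
    exact Complex.cpow_natCast (σ s₀) 3
  rw [hcpow3, hψ'def] at heval
  simp only [Pi.mul_apply] at heval
  rw [hχeq s₀, ← mul_assoc] at heval
  have heval2 : σ s₀ ^ (3 : ℕ) * σ s₀ = (‖ψ s₀‖ : ℂ) :=
    mul_right_cancel₀ (hχne s₀) heval
  have hreal : Real.sqrt r₀ ^ (3 : ℕ) * Real.sqrt r₀ = r₀ := by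
    have h2 : ((Real.sqrt r₀ : ℂ)) ^ (3 : ℕ) * ((Real.sqrt r₀ : ℝ) : ℂ) = ((r₀ : ℝ) : ℂ) := heval2
    exact_mod_cast h2
  have hsq : Real.sqrt r₀ ^ 2 = r₀ := Real.sq_sqrt (le_of_lt hr₀pos)
  nlinarith [hsq, hsq0pos, hr₀pos, hr₀lt]

end Idem

/-- The strong boundary `Γ` of `A(Ŝ)` is a disjoint union of maximal
subgroups of `Ŝ`: for `ψ ∈ Γ` one has `|ψ| ∈ E(Ŝ)` and `|ψ|X ⊆ Γ`; consequently
`Γ = ⋃_{ρ ∈ F} ρX` with `F = {|ψ| : ψ ∈ Γ} ⊆ E(Ŝ)`, the union being disjoint. -/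
theorem stmt7 {S : Type*} [CommMonoid S] [IsCancelMul S] :
    (∀ ψ ∈ strongBoundary S,
      scMod ψ ∈ idemSC S ∧ cosetX S (scMod ψ) ⊆ strongBoundary S) ∧
    (strongBoundary S = ⋃ ρ ∈ (scMod '' strongBoundary S), cosetX S ρ) ∧
    (∀ ρ₁ ∈ scMod '' strongBoundary S, ∀ ρ₂ ∈ scMod '' strongBoundary S,
      ρ₁ ≠ ρ₂ → Disjoint (cosetX S ρ₁) (cosetX S ρ₂)) := by
  classical
  have part1 : ∀ ψ ∈ strongBoundary S,
      scMod ψ ∈ idemSC S ∧ cosetX S (scMod ψ) ⊆ strongBoundary S := by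
    intro ψ hψ
    have hψp : IsPPointA S ψ := hψ
    obtain ⟨hψ1, hψm, hψb⟩ := hψp.1
    obtain ⟨χ, hχabs, hχ1, hχm, hχeq⟩ := exists_char hψ1 hψm
    have hχX : χ ∈ charGroup S := ⟨⟨hχ1, hχm, fun s => le_of_eq (hχabs s)⟩, hχabs⟩
    have hχc : (fun s => starRingEnd ℂ (χ s)) ∈ charGroup S := charGroup_conj hχX
    have hmod : scMod ψ = ψ * (fun s => starRingEnd ℂ (χ s)) := by
      funext t
      show (‖ψ t‖ : ℂ) = ψ t * starRingEnd ℂ (χ t)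
      calc (‖ψ t‖ : ℂ)
          = (‖ψ t‖ : ℂ) * (χ t * starRingEnd ℂ (χ t)) := by
            rw [Complex.mul_conj, ← Complex.sq_norm, hχabs t]; norm_num
        _ = ((‖ψ t‖ : ℂ) * χ t) * starRingEnd ℂ (χ t) := by ring
        _ = ψ t * starRingEnd ℂ (χ t) := by rw [← hχeq t]
    refine ⟨scMod_idem hψp, ?_⟩
    rintro φ ⟨χ', hχ', rfl⟩
    have hrw : scMod ψ * χ' = ψ * ((fun s => starRingEnd ℂ (χ s)) * χ') := by
      rw [hmod, mul_assoc]
    show IsPPointA S (scMod ψ * χ')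
    rw [hrw]
    exact pPoint_mul_char hψp (charGroup_mul hχc hχ')
  refine ⟨part1, ?_, ?_⟩
  · ext φ
    simp only [Set.mem_iUnion]
    constructor
    · intro hφ
      refine ⟨scMod φ, ⟨⟨φ, hφ, rfl⟩, ?_⟩⟩
      have hφp : IsPPointA S φ := hφ
      obtain ⟨hφ1, hφm, hφb⟩ := hφp.1
      obtain ⟨χ, hχabs, hχ1, hχm, hχeq⟩ := exists_char hφ1 hφm
      have hχX : χ ∈ charGroup S := ⟨⟨hχ1, hχm, fun s => le_of_eq (hχabs s)⟩, hχabs⟩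
      exact ⟨χ, hχX, funext fun t => hχeq t⟩
    · rintro ⟨ρ, ⟨⟨ψ₀, hψ₀, rfl⟩, hφ⟩⟩
      exact (part1 ψ₀ hψ₀).2 hφ
  · rintro ρ₁ ⟨ψ₁, hψ₁, rfl⟩ ρ₂ ⟨ψ₂, hψ₂, rfl⟩ hne
    rw [Set.disjoint_left]
    rintro x ⟨χ₁, hχ₁, rfl⟩ ⟨χ₂, hχ₂, heq⟩
    apply hne
    funext t
    have h := congrFun heq t
    have h1 : ‖(scMod ψ₁ * χ₁) t‖ = ‖ψ₁ t‖ := by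
      simp only [Pi.mul_apply, norm_mul, hχ₁.2 t, mul_one, scMod, Complex.norm_real]
      exact _root_.abs_of_nonneg (norm_nonneg (ψ₁ t))
    have h2 : ‖(scMod ψ₂ * χ₂) t‖ = ‖ψ₂ t‖ := by
      simp only [Pi.mul_apply, norm_mul, hχ₂.2 t, mul_one, scMod, Complex.norm_real]
      exact _root_.abs_of_nonneg (norm_nonneg (ψ₂ t))
    show (‖ψ₁ t‖ : ℂ) = (‖ψ₂ t‖ : ℂ)
    rw [← h1, ← h2, h]
end

section
/- Suppose S is countable. Then every character χ ∈ X is a peak point of A(Ŝ): there exists f ∈ A(Ŝ) with f(χ) = 1 and |f(ψ)| < 1 for every ψ ∈ Ŝ with ψ ≠ χ. In particular X is contained in the strong boundary Γ of A(Ŝ). (Such an f is given by f(ψ) = Σₙ ψ(sₙ) · conj(χ(sₙ)) · v(sₙ), where S = {s₁, s₂, …} and v : S → (0, ∞) satisfies Σₙ v(sₙ) = 1.) -/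
open Complex Topology Set

/-- Auxiliary: existence of strictly positive summable weights with total sum `1`. -/
lemma stmt8_weights (S : Type*) [CommMonoid S] [Countable S] :
    ∃ v : S → ℝ, (∀ s, 0 < v s) ∧ Summable v ∧ ∑' s, v s = 1 := by
  obtain ⟨enc, henc⟩ := Countable.exists_injective_nat S
  set w : S → ℝ := fun s => (1 / 2 : ℝ) ^ enc s with hw
  have hwsum : Summable w := summable_geometric_two.comp_injective henc
  have hwpos : ∀ s, 0 < w s := fun s => pow_pos (by norm_num) _
  have hW : 0 < ∑' s, w s := Summable.tsum_pos hwsum (fun s => (hwpos s).le) 1 (hwpos 1)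
  refine ⟨fun s => w s / ∑' s, w s, fun s => div_pos (hwpos s) hW,
    hwsum.div_const _, ?_⟩
  rw [tsum_div_const]
  exact div_self hW.ne'

/-- Auxiliary: every character is a peak point of `A(Ŝ)`. -/
lemma stmt8_peak {S : Type*} [CommMonoid S] [Countable S]
    (χ : S → ℂ) (hχ : χ ∈ charGroup S) :
    ∃ f, MemA S f ∧ f χ = 1 ∧ ∀ ψ ∈ Shat S, ψ ≠ χ → ‖f ψ‖ < 1 := by
  classical
  obtain ⟨v, hvpos, hvsum, hvone⟩ := stmt8_weights S
  have hχm : ∀ s, ‖χ s‖ = 1 := hχ.2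
  have hχ1 : χ 1 = 1 := hχ.1.1
  -- the peaking function
  set F : (S → ℂ) → ℂ := fun g => ∑' s, g s * (starRingEnd ℂ) (χ s) * (v s : ℂ) with hF
  -- basic norm bound for terms
  have hterm : ∀ (g : S → ℂ) (s : S),
      ‖g s * (starRingEnd ℂ) (χ s) * (v s : ℂ)‖ = ‖g s‖ * v s := by
    intro g s
    simp [norm_mul, Complex.norm_conj, hχm s, Complex.norm_real, Real.norm_eq_abs,
      abs_of_pos (hvpos s)]
  have hbound : ∀ (g : S → ℂ) (s : S), ‖g s‖ ≤ 1 →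
      ‖g s * (starRingEnd ℂ) (χ s) * (v s : ℂ)‖ ≤ v s := by
    intro g s hg
    rw [hterm]
    exact mul_le_of_le_one_left (hvpos s).le hg
  have hsum_of : ∀ c : S → ℂ, (∀ s, ‖c s‖ ≤ v s) → Summable c := fun c hc =>
    Summable.of_norm (hvsum.of_nonneg_of_le (fun s => norm_nonneg _) hc)
  -- value at χ
  have hFχ : F χ = 1 := by
    have h1 : ∀ s, χ s * (starRingEnd ℂ) (χ s) * (v s : ℂ) = (v s : ℂ) := by
      intro s
      rw [Complex.mul_conj]
      simp [Complex.normSq_eq_norm_sq, hχm s]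
    have h2 : F χ = ∑' s, ((v s : ℝ) : ℂ) := tsum_congr h1
    have h3 : HasSum (fun s => ((v s : ℝ) : ℂ)) ((1 : ℝ) : ℂ) := by
      have h4 := hvsum.hasSum.mapL Complex.ofRealCLM
      rw [hvone] at h4
      simpa using h4
    rw [h2, h3.tsum_eq]
    simp
  refine ⟨F, ⟨?_, ?_⟩, hFχ, ?_⟩
  · -- continuity on Shat
    exact continuousOn_tsum
      (fun s => (((continuous_apply s).mul continuous_const).mul continuous_const).continuousOn)
      hvsum (fun s g hg => hbound g s (hg.2.2 s))
  · -- generalized analyticity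
    intro ρ hρ ψ hψ
    have hρpos := hρ.1
    have hψS : ψ ∈ Shat S := hψ.1
    have hρim : ∀ s, (ρ s).im = 0 := fun s => (hρpos.2 s).1
    have hρre : ∀ s, 0 ≤ (ρ s).re := fun s => (hρpos.2 s).2
    have hρeq : ∀ s, ρ s = ((ρ s).re : ℂ) := fun s =>
      Complex.ext (by simp) (by simp [hρim s])
    have hρle : ∀ s, (ρ s).re ≤ 1 := fun s =>
      (Complex.re_le_norm _).trans (hρpos.1.2.2 s)
    have habs_pow : ∀ z : ℂ, 0 ≤ z.re → ∀ s, ‖scPow ρ z s‖ ≤ 1 := by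
      intro z hz s
      by_cases h : ρ s = 0
      · simp [scPow, h]
      · have hne0 : (ρ s).re ≠ 0 := by
          intro h0
          exact h (by rw [hρeq s, h0]; simp)
        have hrpos : 0 < (ρ s).re := (hρre s).lt_of_ne (Ne.symm hne0)
        simp only [scPow, if_neg h]
        rw [hρeq s, Complex.norm_cpow_eq_rpow_re_of_pos hrpos]
        exact Real.rpow_le_one hrpos.le (hρle s) hz
    have habs_mul : ∀ z : ℂ, 0 ≤ z.re → ∀ s, ‖(scPow ρ z * ψ) s‖ ≤ 1 := by
      intro z hz s
      rw [Pi.mul_apply, norm_mul]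
      exact mul_le_one₀ (habs_pow z hz s) (norm_nonneg _) (hψS.2.2 s)
    constructor
    · -- differentiability on the right half-plane
      have hopen : IsOpen {z : ℂ | 0 < z.re} := isOpen_lt continuous_const Complex.continuous_re
      refine differentiableOn_tsum_of_summable_norm hvsum (fun s => ?_) hopen
        (fun s z hz => hbound _ s (habs_mul z (le_of_lt hz) s))
      by_cases h : ρ s = 0
      · have : (fun z : ℂ => (scPow ρ z * ψ) s * (starRingEnd ℂ) (χ s) * (v s : ℂ))
            = fun _ => 0 := by
          funext z; simp [scPow, h]
        rw [this]; exact differentiableOn_const 0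
      · have : (fun z : ℂ => (scPow ρ z * ψ) s * (starRingEnd ℂ) (χ s) * (v s : ℂ))
            = fun z : ℂ => ρ s ^ z * (ψ s * ((starRingEnd ℂ) (χ s) * (v s : ℂ))) := by
          funext z; simp [scPow, h]; ring
        rw [this]
        exact ((differentiable_id.const_cpow (Or.inl h)).mul_const _).differentiableOn
    · -- continuity at 0 along (0, ∞)
      have hcont : ContinuousOn (fun t : ℝ => F (scPow ρ (t : ℂ) * ψ)) (Set.Ici 0) := by
        refine continuousOn_tsum (fun s => ?_) hvsum
          (fun s t ht => hbound _ s (habs_mul _ (by simpa using ht) s))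
        by_cases h : ρ s = 0
        · have : (fun t : ℝ => (scPow ρ (t : ℂ) * ψ) s * (starRingEnd ℂ) (χ s) * (v s : ℂ))
              = fun _ => 0 := by
            funext t; simp [scPow, h]
          rw [this]; exact continuousOn_const
        · have : (fun t : ℝ => (scPow ρ (t : ℂ) * ψ) s * (starRingEnd ℂ) (χ s) * (v s : ℂ))
              = fun t : ℝ => ρ s ^ (t : ℂ) * (ψ s * ((starRingEnd ℂ) (χ s) * (v s : ℂ))) := by
            funext t; simp [scPow, h]; ring
          rw [this]
          exact ((Complex.continuous_ofReal.const_cpow (Or.inl h)).mul continuous_const).continuousOn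
      exact (hcont 0 Set.self_mem_Ici).mono Set.Ioi_subset_Ici_self
  · -- strict bound off χ
    intro ψ hψ hne
    have hψ1 : ψ 1 = 1 := hψ.1
    obtain ⟨s₀, hs₀⟩ : ∃ s, ψ s ≠ χ s := by
      by_contra h
      push_neg at h
      exact hne (funext h)
    have hs₀1 : s₀ ≠ 1 := fun h => hs₀ (by rw [h, hψ1, hχ1])
    set a : S → ℂ := fun s => ψ s * (starRingEnd ℂ) (χ s) * (v s : ℂ) with ha
    have hab : ∀ s, ‖a s‖ ≤ v s := fun s => hbound ψ s (hψ.2.2 s)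
    have hsa : Summable a := hsum_of a hab
    -- split the sum at 1 and s₀
    set b : S → ℂ := fun s => if s = 1 then 0 else a s with hb
    have hbb : ∀ s, ‖b s‖ ≤ v s := by
      intro s; rw [hb]; dsimp only
      split_ifs with h
      · simpa using (hvpos s).le
      · exact hab s
    have hsb : Summable b := hsum_of b hbb
    set c : S → ℂ := fun s => if s = s₀ then 0 else b s with hc
    have hcb : ∀ s, ‖c s‖ ≤ v s := by
      intro s; rw [hc]; dsimp only
      split_ifs with h
      · simpa using (hvpos s).le
      · exact hbb s
    have hsc : Summable c := hsum_of c hcb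
    have hsplit : F ψ = a 1 + (a s₀ + ∑' s, c s) := by
      have h1 : F ψ = a 1 + ∑' s, b s := Summable.tsum_eq_add_tsum_ite hsa 1
      have h2 : ∑' s, b s = b s₀ + ∑' s, c s := Summable.tsum_eq_add_tsum_ite hsb s₀
      have h3 : b s₀ = a s₀ := by rw [hb]; simp [hs₀1]
      rw [h1, h2, h3]
    have ha1 : a 1 = (v 1 : ℂ) := by
      rw [ha]; simp [hψ1, hχ1]
    -- bound for the remainder sum
    set d : S → ℝ := fun s => if s = s₀ then 0 else if s = 1 then 0 else v s with hd
    have hdb : ∀ s, d s ≤ v s := by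
      intro s; rw [hd]; dsimp only
      split_ifs with h h'
      · exact (hvpos s).le
      · exact (hvpos s).le
      · exact le_rfl
    have hdnn : ∀ s, 0 ≤ d s := by
      intro s; rw [hd]; dsimp only
      split_ifs <;> simp [(hvpos s).le]
    have hsd : Summable d := hvsum.of_nonneg_of_le hdnn hdb
    have hcd : ∀ s, ‖c s‖ ≤ d s := by
      intro s; rw [hc, hb, hd]; dsimp only
      split_ifs with h h'
      · simp
      · simp
      · exact hab s
    have hdval : ∑' s, d s = 1 - v 1 - v s₀ := by
      set b' : S → ℝ := fun s => if s = 1 then 0 else v s with hb'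
      have hsb' : Summable b' :=
        hvsum.of_nonneg_of_le
          (fun s => by rw [hb']; dsimp only; split_ifs <;> simp [(hvpos s).le])
          (fun s => by rw [hb']; dsimp only; split_ifs with h; exacts [(hvpos s).le, le_rfl])
      have h1 : ∑' s, v s = v 1 + ∑' s, b' s := Summable.tsum_eq_add_tsum_ite hvsum 1
      have h2 : ∑' s, b' s = b' s₀ + ∑' s, d s := Summable.tsum_eq_add_tsum_ite hsb' s₀
      have h3 : b' s₀ = v s₀ := by rw [hb']; simp [hs₀1]
      rw [hvone] at h1
      rw [h2, h3] at h1
      linarith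
    have hcsum : ‖∑' s, c s‖ ≤ 1 - v 1 - v s₀ := by
      rw [← hdval]
      calc ‖∑' s, c s‖ ≤ ∑' s, ‖c s‖ :=
            norm_tsum_le_tsum_norm (hvsum.of_nonneg_of_le (fun s => norm_nonneg _) hcb)
        _ ≤ ∑' s, d s :=
            Summable.tsum_le_tsum hcd (hvsum.of_nonneg_of_le (fun s => norm_nonneg _) hcb) hsd
    -- the key strict inequality at s₀
    set u : ℂ := ψ s₀ * (starRingEnd ℂ) (χ s₀) with hu
    have has₀ : a s₀ = u * (v s₀ : ℂ) := rfl
    have habs_u : ‖u‖ ≤ 1 := by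
      rw [hu, norm_mul, Complex.norm_conj, hχm s₀]
      simpa using hψ.2.2 s₀
    have hu_ne : u ≠ 1 := by
      intro h
      apply hs₀
      have hcc : (starRingEnd ℂ) (χ s₀) * χ s₀ = 1 := by
        rw [mul_comm, Complex.mul_conj]
        simp [Complex.normSq_eq_norm_sq, hχm s₀]
      calc ψ s₀ = ψ s₀ * ((starRingEnd ℂ) (χ s₀) * χ s₀) := by rw [hcc, mul_one]
        _ = u * χ s₀ := by rw [hu, mul_assoc]
        _ = χ s₀ := by rw [h, one_mul]
    have hure : u.re < 1 := by
      rcases lt_or_eq_of_le ((Complex.re_le_norm u).trans habs_u) with h | h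
      · exact h
      · exfalso
        have hns : Complex.normSq u ≤ 1 := by
          rw [← Complex.sq_norm]
          exact pow_le_one₀ (norm_nonneg u) habs_u
        rw [Complex.normSq_apply] at hns
        have him : u.im = 0 := by nlinarith
        exact hu_ne (Complex.ext (by simpa using h) (by simpa using him))
    have hns_u : Complex.normSq u ≤ 1 := by
      rw [← Complex.sq_norm]
      exact pow_le_one₀ (norm_nonneg u) habs_u
    have hkey : ‖(v 1 : ℂ) + a s₀‖ < v 1 + v s₀ := by
      have hv1 := hvpos 1
      have hv0 := hvpos s₀
      have hnormsq : Complex.normSq ((v 1 : ℂ) + u * (v s₀ : ℂ))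
          = (v 1 + u.re * v s₀) ^ 2 + (u.im * v s₀) ^ 2 := by
        rw [Complex.normSq_apply]
        simp [Complex.add_re, Complex.add_im, Complex.mul_re, Complex.mul_im]
        ring
      have hlt : Complex.normSq ((v 1 : ℂ) + u * (v s₀ : ℂ)) < (v 1 + v s₀) ^ 2 := by
        rw [hnormsq]
        rw [Complex.normSq_apply] at hns_u
        have hx1 : 0 < v 1 * v s₀ * (1 - u.re) :=
          mul_pos (mul_pos hv1 hv0) (by linarith)
        have hx2 : 0 ≤ v s₀ * v s₀ * (1 - (u.re * u.re + u.im * u.im)) :=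
          mul_nonneg (mul_nonneg hv0.le hv0.le) (by linarith)
        nlinarith [hx1, hx2]
      rw [has₀]
      refine lt_of_pow_lt_pow_left₀ 2 (by positivity) ?_
      rw [Complex.sq_norm]
      exact hlt
    -- assemble
    have hF1 : ‖F ψ‖ ≤ ‖(v 1 : ℂ) + a s₀‖ + ‖∑' s, c s‖ := by
      rw [hsplit, ha1, ← add_assoc]
      exact norm_add_le _ _
    calc ‖F ψ‖
        ≤ ‖(v 1 : ℂ) + a s₀‖ + ‖∑' s, c s‖ := hF1
      _ ≤ ‖(v 1 : ℂ) + a s₀‖ + (1 - v 1 - v s₀) := by linarith [hcsum]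
      _ < (v 1 + v s₀) + (1 - v 1 - v s₀) := by linarith [hkey]
      _ = 1 := by ring

/-- If `S` is countable, then every character `χ ∈ X` is a peak point of
`A(Ŝ)`; in particular `X` is contained in the strong boundary of `A(Ŝ)`. -/
theorem stmt8 {S : Type*} [CommMonoid S] [IsCancelMul S] [Countable S] :
    (∀ χ ∈ charGroup S, ∃ f, MemA S f ∧ f χ = 1 ∧
      ∀ ψ ∈ Shat S, ψ ≠ χ → ‖f ψ‖ < 1) ∧
    charGroup S ⊆ strongBoundary S := by
  constructor
  · exact fun χ hχ => stmt8_peak χ hχ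
  · intro χ hχ
    obtain ⟨f, hfA, hf1, hflt⟩ := stmt8_peak χ hχ
    refine ⟨hχ.1, {{χ}}, ?_, Set.sInter_singleton _⟩
    intro P hP
    rw [Set.mem_singleton_iff] at hP
    subst hP
    refine ⟨Set.singleton_subset_iff.2 hχ.1, isClosed_singleton, f, hfA, ?_, ?_⟩
    · intro ψ hψ
      rw [Set.mem_singleton_iff] at hψ
      rw [hψ, hf1]
    · intro ψ hψ
      exact hflt ψ hψ.1 (by simpa using hψ.2)
end

section
/- Let ρ₀ ∈ E₀(Ŝ). Then every f ∈ A(Ŝ) satisfies |f(ρ₀)| ≤ sup_{χ ∈ X} |f(χ)|; that is, the modulus of f at ρ₀ is bounded by the maximum of |f| over the character group X. -/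
open Complex Topology Set

lemma shat_isCompact {S : Type*} [CommMonoid S] : IsCompact (Shat S) := by
  have hsub : Shat S ⊆ Set.univ.pi (fun _ : S => Metric.closedBall (0 : ℂ) 1) := by
    intro ψ hψ s _
    simpa [Metric.mem_closedBall, Complex.dist_eq] using hψ.2.2 s
  have h1 : IsClosed {ψ : S → ℂ | ψ 1 = 1} := isClosed_eq (continuous_apply 1) continuous_const
  have h2 : IsClosed {ψ : S → ℂ | ∀ s t, ψ (s * t) = ψ s * ψ t} := by
    rw [Set.setOf_forall]
    refine isClosed_iInter fun s => ?_
    rw [Set.setOf_forall]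
    exact isClosed_iInter fun t =>
      isClosed_eq (continuous_apply _) ((continuous_apply s).mul (continuous_apply t))
  have h3 : IsClosed {ψ : S → ℂ | ∀ s, ‖ψ s‖ ≤ 1} := by
    rw [Set.setOf_forall]
    exact isClosed_iInter fun s =>
      isClosed_le (continuous_norm.comp (continuous_apply s)) continuous_const
  have hclosed : IsClosed (Shat S) := h1.inter (h2.inter h3)
  exact ((isCompact_univ_pi fun _ => isCompact_closedBall 0 1)).of_isClosed_subset hclosed hsub

/-- For `ρ₀ ∈ E₀(Ŝ)`, every `f ∈ A(Ŝ)` satisfies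
`|f(ρ₀)| ≤ sup_{χ ∈ X} |f(χ)|`. -/
theorem stmt10 {S : Type*} [CommMonoid S] [IsCancelMul S]
    (ρ₀ : S → ℂ) (h : ρ₀ ∈ E0 S) (f : (S → ℂ) → ℂ) (hf : MemA S f) :
    ‖f ρ₀‖ ≤ sSup ((fun χ => ‖f χ‖) '' charGroup S) := by
  classical
  obtain ⟨⟨hρ₀S, hρ₀idem⟩, ρ₁, ⟨hρ₁S, hρ₁pos⟩, hρ₁one, hρ₁lt⟩ := h
  set m := sSup ((fun χ => ‖f χ‖) '' charGroup S) with hm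
  obtain ⟨M, hM⟩ := shat_isCompact.exists_bound_of_continuousOn hf.1
  have hbdd : BddAbove ((fun χ => ‖f χ‖) '' charGroup S) := by
    refine ⟨M, ?_⟩
    rintro y ⟨χ, hχ, rfl⟩
    simpa using hM χ hχ.1
  by_cases hcase : ∀ s, ρ₀ s ≠ 0
  · have hch : ρ₀ ∈ charGroup S := by
      refine ⟨hρ₀S, fun s => ?_⟩
      rcases hρ₀idem s with h0 | h1
      · exact absurd h0 (hcase s)
      · simp [h1]
    exact le_csSup hbdd ⟨ρ₀, hch, rfl⟩
  push_neg at hcase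
  obtain ⟨s₀, hs₀⟩ := hcase
  -- basic facts about ρ₁
  have hre0 : ∀ s, 0 < (ρ₁ s).re := by
    intro s
    rcases eq_or_ne (ρ₀ s) 0 with h0 | h1
    · exact (hρ₁lt s h0).1
    · rw [hρ₁one s h1]; norm_num
  have hρ₁eq : ∀ s, ρ₁ s = ((ρ₁ s).re : ℂ) := fun s =>
    (Complex.ext (by simp) (by simp [(hρ₁pos s).1])).symm
  have hne : ∀ s, ρ₁ s ≠ 0 := by
    intro s hzero
    have := hre0 s
    rw [hzero] at this
    simp at this
  have hle1 : ∀ s, (ρ₁ s).re ≤ 1 := by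
    intro s
    have h := hρ₁S.2.2 s
    rw [hρ₁eq s, Complex.norm_real, Real.norm_eq_abs] at h
    exact le_trans (le_abs_self _) h
  -- the power map stays in Shat for Re z ≥ 0
  have lemA : ∀ z : ℂ, 0 ≤ z.re → scPow ρ₁ z ∈ Shat S := by
    intro z hz
    refine ⟨?_, ?_, ?_⟩
    · simp [scPow, hne 1, hρ₁S.1]
    · intro s t
      simp only [scPow, if_neg (hne _)]
      rw [hρ₁S.2.1 s t, hρ₁eq s, hρ₁eq t]
      exact Complex.mul_cpow_ofReal_nonneg (hre0 s).le (hre0 t).le z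
    · intro s
      simp only [scPow, if_neg (hne _)]
      rw [hρ₁eq s, Complex.norm_cpow_eq_rpow_re_of_pos (hre0 s)]
      exact Real.rpow_le_one (hre0 s).le (hle1 s) hz
  -- imaginary-axis powers are characters
  have lemB : ∀ y : ℝ, scPow ρ₁ ((y : ℂ) * Complex.I) ∈ charGroup S := by
    intro y
    refine ⟨lemA _ (by simp), fun s => ?_⟩
    simp only [scPow, if_neg (hne _)]
    rw [hρ₁eq s, Complex.norm_cpow_eq_rpow_re_of_pos (hre0 s)]
    simp
  set g : ℂ → ℂ := fun z => f (scPow ρ₁ z) with hg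
  have hΦcont : Continuous fun z : ℂ => scPow ρ₁ z := by
    refine continuous_pi fun s => ?_
    have : (fun z : ℂ => scPow ρ₁ z s) = fun z => Complex.exp (Complex.log (ρ₁ s) * z) := by
      funext z
      simp only [scPow, if_neg (hne s)]
      exact Complex.cpow_def_of_ne_zero (hne s) z
    rw [this]
    exact Complex.continuous_exp.comp (continuous_const.mul continuous_id)
  have hgcont : ContinuousOn g {z : ℂ | 0 ≤ z.re} :=
    hf.1.comp hΦcont.continuousOn fun z hz => lemA z hz
  have hopen : IsOpen {z : ℂ | 0 < z.re} := isOpen_lt continuous_const Complex.continuous_re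
  have hgdiff : DifferentiableOn ℂ g {z : ℂ | 0 < z.re} := by
    intro w hw
    have hw' : (0 : ℝ) < w.re := hw
    set ε : ℝ := w.re / 2 with hε
    have hε0 : 0 < ε := by positivity
    have hψmem : scPow ρ₁ (ε : ℂ) ∈ Shat S \ charGroup S := by
      refine ⟨lemA _ (by simp [hε0.le]), fun hmem => ?_⟩
      have habs := hmem.2 s₀
      rw [show scPow ρ₁ (ε : ℂ) s₀ = ((ρ₁ s₀).re : ℂ) ^ (ε : ℂ) by
        simp only [scPow, if_neg (hne _)]
        exact congrArg (· ^ (ε : ℂ)) (hρ₁eq s₀)] at habs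
      rw [Complex.norm_cpow_eq_rpow_re_of_pos (hre0 s₀)] at habs
      have hlt : (ρ₁ s₀).re ^ ((ε : ℂ)).re < 1 :=
        Real.rpow_lt_one (hre0 s₀).le (hρ₁lt s₀ hs₀).2 (by simpa using hε0)
      rw [habs] at hlt
      exact lt_irrefl _ hlt
    have hρmem : ρ₁ ∈ ShatPos S \ charGroup S := by
      refine ⟨⟨hρ₁S, hρ₁pos⟩, fun hmem => ?_⟩
      have habs := hmem.2 s₀
      rw [hρ₁eq s₀, Complex.norm_real, Real.norm_eq_abs, _root_.abs_of_nonneg (hre0 s₀).le] at habs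
      exact absurd habs (ne_of_lt (hρ₁lt s₀ hs₀).2)
    have hdiff := (hf.2 ρ₁ hρmem _ hψmem).1
    have heq : (fun z : ℂ => f (scPow ρ₁ z * scPow ρ₁ (ε : ℂ))) = fun z : ℂ => g (z + ε) := by
      funext z
      refine congrArg f (funext fun s => ?_)
      simp only [Pi.mul_apply, scPow, if_neg (hne s)]
      exact (Complex.cpow_add _ _ (hne s)).symm
    rw [heq] at hdiff
    have h1 : DifferentiableAt ℂ (fun z : ℂ => g (z + ε)) (w - ε) := by
      refine hdiff.differentiableAt (hopen.mem_nhds ?_)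
      show 0 < (w - (ε : ℂ)).re
      simp only [Complex.sub_re, Complex.ofReal_re]
      rw [hε]; linarith
    have h2 : DifferentiableAt ℂ g w := by
      have h3 := h1.comp w ((differentiableAt_id.sub_const ((ε : ℂ))))
      have h4 : ∀ z : ℂ, ((fun z : ℂ => g (z + ε)) ∘ fun y : ℂ => id y - ε) z = g z := by
        intro z
        show g (id z - ε + ε) = g z
        exact congrArg g (by simp)
      rwa [funext h4] at h3
    exact h2.differentiableWithinAt
  have hd : DiffContOnCl ℂ g {z : ℂ | 0 < z.re} := by
    refine ⟨hgdiff, hgcont.mono (closure_minimal (fun z hz => show (0:ℝ) ≤ z.re from le_of_lt hz) ?_)⟩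
    exact isClosed_le continuous_const Complex.continuous_re
  have hexp : ∃ c < (2 : ℝ), ∃ B, g =O[Bornology.cobounded ℂ ⊓ Filter.principal {z : ℂ | 0 < z.re}]
      fun z => Real.exp (B * ‖z‖ ^ c) := by
    refine ⟨1, one_lt_two, 0, Asymptotics.IsBigO.of_bound M ?_⟩
    refine Filter.eventually_inf_principal.2 (Filter.Eventually.of_forall fun z hz => ?_)
    have := hM _ (lemA z (le_of_lt hz))
    simpa using this
  have hre : Filter.IsBoundedUnder (· ≤ ·) Filter.atTop fun x : ℝ => ‖g x‖ := by
    refine ⟨M, Filter.eventually_map.mpr ?_⟩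
    filter_upwards [Filter.eventually_ge_atTop (0 : ℝ)] with x hx
    exact hM _ (lemA _ (by simpa using hx))
  have him : ∀ x : ℝ, ‖g ((x : ℂ) * Complex.I)‖ ≤ m := by
    intro x
    exact le_csSup hbdd ⟨_, lemB x, rfl⟩
  have hPL : ∀ z : ℂ, 0 ≤ z.re → ‖g z‖ ≤ m := fun z hz =>
    PhragmenLindelof.right_half_plane_of_bounded_on_real hd hexp hre him hz
  -- limit along the positive reals
  have hΦlim : Filter.Tendsto (fun t : ℝ => scPow ρ₁ (t : ℂ)) Filter.atTop (nhds ρ₀) := by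
    refine tendsto_pi_nhds.2 fun s => ?_
    rcases eq_or_ne (ρ₀ s) 0 with h0 | h1
    · have hx := hρ₁lt s h0
      have hval : (fun t : ℝ => scPow ρ₁ (t : ℂ) s) = fun t : ℝ => (((ρ₁ s).re ^ t : ℝ) : ℂ) := by
        funext t
        simp only [scPow, if_neg (hne s)]
        rw [Complex.ofReal_cpow hx.1.le t]
        exact congrArg (· ^ (t : ℂ)) (hρ₁eq s)
      rw [hval, h0]
      have h2 : Filter.Tendsto (fun t : ℝ => (ρ₁ s).re ^ t) Filter.atTop (nhds 0) :=
        tendsto_rpow_atTop_of_base_lt_one _ (by linarith [hx.1]) hx.2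
      have h3 := (Complex.continuous_ofReal.tendsto 0).comp h2
      simpa [Function.comp_def] using h3
    · have h1' : ρ₀ s = 1 := (hρ₀idem s).resolve_left h1
      have hone : ρ₁ s = 1 := hρ₁one s h1
      have : (fun t : ℝ => scPow ρ₁ (t : ℂ) s) = fun _ : ℝ => (1 : ℂ) := by
        funext t
        simp [scPow, if_neg (hne s), hone]
      rw [this, h1']
      exact tendsto_const_nhds
  have hΦlim' : Filter.Tendsto (fun t : ℝ => scPow ρ₁ (t : ℂ)) Filter.atTop
      (nhdsWithin ρ₀ (Shat S)) := by
    rw [tendsto_nhdsWithin_iff]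
    refine ⟨hΦlim, ?_⟩
    filter_upwards [Filter.eventually_ge_atTop (0 : ℝ)] with t ht
    exact lemA _ (by simpa using ht)
  have hglim : Filter.Tendsto (fun t : ℝ => g (t : ℂ)) Filter.atTop (nhds (f ρ₀)) :=
    (hf.1 ρ₀ hρ₀S).tendsto.comp hΦlim'
  have hfinal : ‖f ρ₀‖ ≤ m := by
    refine le_of_tendsto hglim.norm ?_
    filter_upwards [Filter.eventually_ge_atTop (0 : ℝ)] with t ht
    exact hPL _ (by simpa using ht)
  exact hfinal
end

section
/- Let α, β be irrational real numbers with β < α < 0, and let S_{αβ} = {(m, n) ∈ ℤ² : αm ≤ n and βm ≤ n}. Then S_{αβ} is a cancellative abelian submonoid of ℤ² (with identity (0,0)) that contains no nontrivial simple ideals. Moreover, if in addition α − β > 1, then S_{αβ} ∖ {(0, 1)} is also a cancellative abelian submonoid of ℤ² containing no nontrivial simple ideals. -/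
/-- An ideal of an additive submonoid-like subset `T` of `ℤ × ℤ`: a nonempty proper
subset `I ⊆ T` with `T + I ⊆ I`. -/
def IsIdealIn (T I : Set (ℤ × ℤ)) : Prop :=
  I ⊆ T ∧ I.Nonempty ∧ I ≠ T ∧ ∀ s ∈ T, ∀ a ∈ I, s + a ∈ I

/-- A simple ideal: an ideal whose complement in `T` is a subsemigroup. -/
def IsSimpleIdealIn (T I : Set (ℤ × ℤ)) : Prop :=
  IsIdealIn T I ∧ ∀ a ∈ T \ I, ∀ b ∈ T \ I, a + b ∈ T \ I

/-- A nontrivial simple ideal: a simple ideal different from `T ∖ {0}`. -/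
def IsNontrivialSimpleIdealIn (T I : Set (ℤ × ℤ)) : Prop :=
  IsSimpleIdealIn T I ∧ I ≠ T \ {0}

/-- Classification lemma: if `T` contains `0` and for every nonzero `s ∈ T` and every
`a ∈ T` there is `k : ℕ` with `k • s - a ∈ T`, then every simple ideal of `T` is `T \ {0}`. -/
lemma classify_aux (T : Set (ℤ × ℤ)) (h0 : (0 : ℤ × ℤ) ∈ T)
    (hstep : ∀ s ∈ T, s ≠ 0 → ∀ a ∈ T, ∃ k : ℕ, k • s - a ∈ T) :
    ∀ I : Set (ℤ × ℤ), IsSimpleIdealIn T I → I = T \ {0} := by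
  rintro I ⟨⟨hIT, ⟨a, haI⟩, hIne, hideal⟩, hsimple⟩
  have h0I : (0 : ℤ × ℤ) ∉ I := by
    intro h
    apply hIne
    apply Set.Subset.antisymm hIT
    intro s hs
    simpa using hideal s hs 0 h
  ext s
  constructor
  · intro hs
    refine ⟨hIT hs, ?_⟩
    simp only [Set.mem_singleton_iff]
    rintro rfl
    exact h0I hs
  · rintro ⟨hsT, hs0⟩
    simp only [Set.mem_singleton_iff] at hs0
    by_contra hsI
    have hC : ∀ k : ℕ, (k • s) ∈ T \ I := by
      intro k
      induction k with
      | zero => simpa using ⟨h0, h0I⟩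
      | succ n ih =>
        have h := hsimple _ ih s ⟨hsT, hsI⟩
        rw [succ_nsmul]
        exact h
    obtain ⟨k, hk⟩ := hstep s hsT hs0 a (hIT haI)
    have hmem : k • s ∈ I := by
      have h := hideal _ hk a haI
      simpa using h
    exact (hC k).2 hmem

/-- Positivity of slacks for nonzero elements of `S`. -/
lemma slack_pos (α β : ℝ) (hα : Irrational α) (hβ : Irrational β) (m n : ℤ)
    (h1 : α * m ≤ n) (h2 : β * m ≤ n) (hne : (m, n) ≠ (0 : ℤ × ℤ)) :
    α * m < n ∧ β * m < n := by
  rcases eq_or_ne m 0 with rfl | hm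
  · have hn : n ≠ 0 := by simpa [Prod.ext_iff] using hne
    have hn0 : (0 : ℝ) ≤ n := by simpa using h1
    have : (0 : ℝ) < n := lt_of_le_of_ne hn0 (by exact_mod_cast (Ne.symm hn))
    constructor <;> simpa using this
  · constructor
    · refine lt_of_le_of_ne h1 ?_
      exact (hα.mul_intCast hm).ne_int n
    · refine lt_of_le_of_ne h2 ?_
      exact (hβ.mul_intCast hm).ne_int n

/-- Archimedean step for `S`. -/
lemma step_S (α β : ℝ) (hα : Irrational α) (hβ : Irrational β) :
    ∀ s ∈ {p : ℤ × ℤ | α * p.1 ≤ p.2 ∧ β * p.1 ≤ p.2}, s ≠ 0 →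
      ∀ a ∈ {p : ℤ × ℤ | α * p.1 ≤ p.2 ∧ β * p.1 ≤ p.2},
        ∃ k : ℕ, k • s - a ∈ {p : ℤ × ℤ | α * p.1 ≤ p.2 ∧ β * p.1 ≤ p.2} := by
  rintro ⟨m, n⟩ ⟨h1, h2⟩ hs0 ⟨p, q⟩ ⟨h3, h4⟩
  simp only [Set.mem_setOf_eq] at *
  obtain ⟨hu, hv⟩ := slack_pos α β hα hβ m n h1 h2 hs0
  have hu' : (0 : ℝ) < n - α * m := by linarith
  have hv' : (0 : ℝ) < n - β * m := by linarith
  obtain ⟨k1, hk1⟩ := exists_nat_ge ((q - α * p) / (n - α * m))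
  obtain ⟨k2, hk2⟩ := exists_nat_ge ((q - β * p) / (n - β * m))
  refine ⟨max k1 k2, ?_, ?_⟩
  · have hk : ((q - α * p) / (n - α * m)) ≤ (max k1 k2 : ℕ) := by
      refine le_trans hk1 ?_
      exact_mod_cast Nat.le_max_left k1 k2
    rw [div_le_iff₀ hu'] at hk
    show α * ((((max k1 k2 : ℕ) • (m, n) - (p, q) : ℤ × ℤ).1 : ℤ) : ℝ) ≤
      ((((max k1 k2 : ℕ) • (m, n) - (p, q) : ℤ × ℤ).2 : ℤ) : ℝ)
    simp only [Prod.smul_mk, Prod.mk_sub_mk, smul_eq_mul, nsmul_eq_mul]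
    push_cast
    push_cast at hk
    nlinarith
  · have hk : ((q - β * p) / (n - β * m)) ≤ (max k1 k2 : ℕ) := by
      refine le_trans hk2 ?_
      exact_mod_cast Nat.le_max_right k1 k2
    rw [div_le_iff₀ hv'] at hk
    show β * ((((max k1 k2 : ℕ) • (m, n) - (p, q) : ℤ × ℤ).1 : ℤ) : ℝ) ≤
      ((((max k1 k2 : ℕ) • (m, n) - (p, q) : ℤ × ℤ).2 : ℤ) : ℝ)
    simp only [Prod.smul_mk, Prod.mk_sub_mk, smul_eq_mul, nsmul_eq_mul]
    push_cast
    push_cast at hk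
    nlinarith

/-- Closure of `S` under addition. -/
lemma closure_S (α β : ℝ) :
    ∀ a ∈ {p : ℤ × ℤ | α * p.1 ≤ p.2 ∧ β * p.1 ≤ p.2},
      ∀ b ∈ {p : ℤ × ℤ | α * p.1 ≤ p.2 ∧ β * p.1 ≤ p.2},
        a + b ∈ {p : ℤ × ℤ | α * p.1 ≤ p.2 ∧ β * p.1 ≤ p.2} := by
  rintro ⟨m, n⟩ ⟨h1, h2⟩ ⟨p, q⟩ ⟨h3, h4⟩
  simp only [Set.mem_setOf_eq, Prod.mk_add_mk] at *
  constructor <;> push_cast <;> push_cast at h1 h2 h3 h4 <;> nlinarith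

/-- The sum of two elements of `S \ {(0,1)}` is not `(0,1)` when `α - β > 1`. -/
lemma sum_ne (α β : ℝ) (hgap : α - β > 1) :
    ∀ a ∈ {p : ℤ × ℤ | α * p.1 ≤ p.2 ∧ β * p.1 ≤ p.2} \ {((0 : ℤ), (1 : ℤ))},
      ∀ b ∈ {p : ℤ × ℤ | α * p.1 ≤ p.2 ∧ β * p.1 ≤ p.2} \ {((0 : ℤ), (1 : ℤ))},
        a + b ≠ ((0 : ℤ), (1 : ℤ)) := by
  rintro ⟨m, n⟩ ⟨⟨h1, h2⟩, ha⟩ ⟨p, q⟩ ⟨⟨h3, h4⟩, hb⟩ heq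
  simp only [Set.mem_setOf_eq, Set.mem_singleton_iff, Prod.mk_add_mk, Prod.mk.injEq] at *
  obtain ⟨hmp, hnq⟩ := heq
  have hp : p = -m := by omega
  have hq : q = 1 - n := by omega
  subst hp hq
  rcases lt_trichotomy m 0 with hm | hm | hm
  · -- m < 0 : use βm ≤ n and -αm ≤ 1-n
    have hm1 : (m : ℝ) ≤ -1 := by exact_mod_cast (by omega : m ≤ -1)
    push_cast at h2 h3
    nlinarith
  · subst hm
    have hn0 : (0:ℤ) ≤ n := by exact_mod_cast (by simpa using h1 : (0:ℝ) ≤ (n:ℝ))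
    have hn3 : (0:ℝ) ≤ (1:ℝ) - n := by simpa using h3
    have hn1' : n ≤ 1 := by exact_mod_cast (by linarith : (n:ℝ) ≤ 1)
    interval_cases n <;> simp_all
  · have hm1 : (1 : ℝ) ≤ m := by exact_mod_cast (by omega : 1 ≤ m)
    push_cast at h1 h4
    nlinarith

/-- Archimedean step for `S \ {(0,1)}`. -/
lemma step_S' (α β : ℝ) (hα : Irrational α) (hβ : Irrational β) :
    ∀ s ∈ {p : ℤ × ℤ | α * p.1 ≤ p.2 ∧ β * p.1 ≤ p.2} \ {((0 : ℤ), (1 : ℤ))}, s ≠ 0 →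
      ∀ a ∈ {p : ℤ × ℤ | α * p.1 ≤ p.2 ∧ β * p.1 ≤ p.2} \ {((0 : ℤ), (1 : ℤ))},
        ∃ k : ℕ, k • s - a ∈
          {p : ℤ × ℤ | α * p.1 ≤ p.2 ∧ β * p.1 ≤ p.2} \ {((0 : ℤ), (1 : ℤ))} := by
  rintro s ⟨hsS, -⟩ hs0 a ⟨haS, -⟩
  obtain ⟨k, hk⟩ := step_S α β hα hβ s hsS hs0 a haS
  by_cases hcase : k • s - a = ((0 : ℤ), (1 : ℤ))
  · refine ⟨k + 1, ?_, ?_⟩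
    · have : (k + 1) • s - a = (k • s - a) + s := by
        rw [succ_nsmul]; abel
      rw [this]
      exact closure_S α β _ hk s hsS
    · simp only [Set.mem_singleton_iff]
      intro h
      have : (k + 1) • s - a = (k • s - a) + s := by
        rw [succ_nsmul]; abel
      rw [this, hcase] at h
      apply hs0
      have := add_right_injective ((0 : ℤ), (1 : ℤ))
      have hs : s = 0 := by
        have h' : ((0 : ℤ), (1 : ℤ)) + s = ((0 : ℤ), (1 : ℤ)) + 0 := by
          rw [add_zero]; exact h
        exact add_left_cancel h'
      exact hs
  · exact ⟨k, hk, hcase⟩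

/-- For irrational `β < α < 0`, the set
`S_{αβ} = {(m, n) ∈ ℤ² : αm ≤ n ∧ βm ≤ n}` is a cancellative abelian submonoid of `ℤ²`
with no nontrivial simple ideals; and if moreover `α - β > 1`, the same holds for
`S_{αβ} ∖ {(0, 1)}`. -/
theorem stmt19 (α β : ℝ) (hα : Irrational α) (hβ : Irrational β)
    (hβα : β < α) (hα0 : α < 0) :
    (0 : ℤ × ℤ) ∈ {p : ℤ × ℤ | α * p.1 ≤ p.2 ∧ β * p.1 ≤ p.2} ∧
    (∀ a ∈ {p : ℤ × ℤ | α * p.1 ≤ p.2 ∧ β * p.1 ≤ p.2},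
      ∀ b ∈ {p : ℤ × ℤ | α * p.1 ≤ p.2 ∧ β * p.1 ≤ p.2},
        a + b ∈ {p : ℤ × ℤ | α * p.1 ≤ p.2 ∧ β * p.1 ≤ p.2}) ∧
    (∀ a b c : ℤ × ℤ, a + b = a + c → b = c) ∧
    (∀ I : Set (ℤ × ℤ),
      IsSimpleIdealIn {p : ℤ × ℤ | α * p.1 ≤ p.2 ∧ β * p.1 ≤ p.2} I →
        I = {p : ℤ × ℤ | α * p.1 ≤ p.2 ∧ β * p.1 ≤ p.2} \ {0}) ∧
    (α - β > 1 →
      (0 : ℤ × ℤ) ∈ {p : ℤ × ℤ | α * p.1 ≤ p.2 ∧ β * p.1 ≤ p.2} \ {((0 : ℤ), (1 : ℤ))} ∧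
      (∀ a ∈ {p : ℤ × ℤ | α * p.1 ≤ p.2 ∧ β * p.1 ≤ p.2} \ {((0 : ℤ), (1 : ℤ))},
        ∀ b ∈ {p : ℤ × ℤ | α * p.1 ≤ p.2 ∧ β * p.1 ≤ p.2} \ {((0 : ℤ), (1 : ℤ))},
          a + b ∈ {p : ℤ × ℤ | α * p.1 ≤ p.2 ∧ β * p.1 ≤ p.2} \ {((0 : ℤ), (1 : ℤ))}) ∧
      (∀ I : Set (ℤ × ℤ),
        IsSimpleIdealIn
            ({p : ℤ × ℤ | α * p.1 ≤ p.2 ∧ β * p.1 ≤ p.2} \ {((0 : ℤ), (1 : ℤ))}) I →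
          I = ({p : ℤ × ℤ | α * p.1 ≤ p.2 ∧ β * p.1 ≤ p.2} \ {((0 : ℤ), (1 : ℤ))}) \ {0})) := by
  have h0S : (0 : ℤ × ℤ) ∈ {p : ℤ × ℤ | α * p.1 ≤ p.2 ∧ β * p.1 ≤ p.2} := by
    simp [Set.mem_setOf_eq]
  refine ⟨h0S, closure_S α β, fun a b c h => add_left_cancel h,
    classify_aux _ h0S (step_S α β hα hβ), fun hgap => ?_⟩
  have h0S' : (0 : ℤ × ℤ) ∈
      {p : ℤ × ℤ | α * p.1 ≤ p.2 ∧ β * p.1 ≤ p.2} \ {((0 : ℤ), (1 : ℤ))} := by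
    refine ⟨h0S, ?_⟩
    simp [Prod.ext_iff]
  refine ⟨h0S', ?_, classify_aux _ h0S' (step_S' α β hα hβ)⟩
  rintro a ⟨haS, ha⟩ b ⟨hbS, hb⟩
  exact ⟨closure_S α β a haS b hbS, sum_ne α β hgap a ⟨haS, ha⟩ b ⟨hbS, hb⟩⟩
end
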